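/- arXiv:2402.13084 — 2 statements merged into one kernel-verified Lean document; each statement's English description precedes it below -/
import Mathlib

section
/- Let n = 1, 0 < q < 1 < p < ∞ with 1/q = 1/p + 1/r, and for a positive integer l let g = Σ_{I ∈ D[0,1], |I| = 2^{-l}} |I|^{1/2} h_I. Then S_d(g) = χ_{[0,1]} (so ‖g‖_{Ḣ_d^r(ℝ)} = 1), while the formal adjoint π_g^t(f) = Σ_I ⟨f,h_I⟩⟨g,h_I⟩ χ_I/|I| satisfies: for every f with ‖f‖_{Λ̇^{1/q−1}_d(ℝ)} ≤ 1, |π_g^t(f)| ≤ 2^{l(1−1/q)} χ_{[0,1]} pointwise. -/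
open MeasureTheory ENNReal
open scoped Classical

noncomputable section

/-- The dyadic interval `[2^k m, 2^k (m+1))` in `ℝ`. -/
def dInt (k m : ℤ) : Set ℝ :=
  Set.Ico ((2 : ℝ) ^ k * (m : ℝ)) ((2 : ℝ) ^ k * ((m : ℝ) + 1))

/-- The Haar function `h_I = |I|^{-1/2} (χ_{I⁻} - χ_{I⁺})` on the dyadic interval
`I = [2^k m, 2^k (m+1))`. -/
def haarI (k m : ℤ) (t : ℝ) : ℝ :=
  if (2 : ℝ) ^ k * (m : ℝ) ≤ t ∧ t < (2 : ℝ) ^ k * ((m : ℝ) + 1) then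
    ((2 : ℝ) ^ k) ^ (-(1 / 2 : ℝ)) *
      (if t < (2 : ℝ) ^ k * ((m : ℝ) + 1 / 2) then 1 else -1)
  else 0

/-- The `1`-mean oscillation of `f` over the dyadic interval indexed by `(k, m)`. -/
def dOsc (f : ℝ → ℝ) (k m : ℤ) : ℝ :=
  (volume (dInt k m)).toReal⁻¹ *
    ∫ t in dInt k m, |f t - (volume (dInt k m)).toReal⁻¹ * ∫ u in dInt k m, f u|

/-- The Haar coefficients of `g = Σ_{I ∈ D[0,1], |I| = 2^{-l}} |I|^{1/2} h_I`. -/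
def gcoef (l : ℕ) (c : ℤ × ℤ) : ℝ :=
  if c.1 = -(l : ℤ) ∧ 0 ≤ c.2 ∧ c.2 < 2 ^ l then Real.sqrt ((2 : ℝ) ^ (-(l : ℤ))) else 0

/-- The dyadic square function of `g`. -/
def sdg (l : ℕ) (x : ℝ) : ℝ :=
  Real.sqrt (∑' c : ℤ × ℤ,
    (gcoef l c) ^ 2 * (dInt c.1 c.2).indicator (fun _ => (1 : ℝ)) x / (2 : ℝ) ^ c.1)

/-- The formal adjoint `π_g^t(f) = Σ_I ⟨f,h_I⟩ ⟨g,h_I⟩ χ_I / |I|`. -/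
def piAdj (l : ℕ) (f : ℝ → ℝ) (x : ℝ) : ℝ :=
  ∑' c : ℤ × ℤ,
    (∫ t, f t * haarI c.1 c.2 t) * gcoef l c *
      (dInt c.1 c.2).indicator (fun _ => (1 : ℝ)) x / (2 : ℝ) ^ c.1

lemma two_zpow_pos (k : ℤ) : (0:ℝ) < 2 ^ k := by positivity

lemma volume_dInt (k m : ℤ) : volume (dInt k m) = ENNReal.ofReal ((2:ℝ)^k) := by
  rw [dInt, Real.volume_Ico]
  congr 1
  ring

lemma mem_dInt_iff {k m : ℤ} {x : ℝ} : x ∈ dInt k m ↔ ⌊x / (2:ℝ)^k⌋ = m := by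
  rw [Int.floor_eq_iff, dInt, Set.mem_Ico, le_div_iff₀ (two_zpow_pos k),
    div_lt_iff₀ (two_zpow_pos k)]
  constructor <;> rintro ⟨h1, h2⟩ <;> constructor <;> nlinarith

lemma measurable_haarI (k m : ℤ) : Measurable (haarI k m) := by
  unfold haarI
  refine Measurable.ite ?_ ?_ measurable_const
  · exact (measurableSet_Ico : MeasurableSet (Set.Ico ((2:ℝ)^k * m) ((2:ℝ)^k * (m+1))))
  · exact measurable_const.mul (Measurable.ite (measurableSet_Iio (a := (2:ℝ)^k * (m+1/2)))
      measurable_const measurable_const)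

lemma abs_haarI_le (k m : ℤ) (t : ℝ) : |haarI k m t| ≤ ((2:ℝ)^k) ^ (-(1/2:ℝ)) := by
  have h0 : (0:ℝ) ≤ ((2:ℝ)^k) ^ (-(1/2:ℝ)) := Real.rpow_nonneg (two_zpow_pos k).le _
  have h : |((2:ℝ)^k) ^ (-(1/2:ℝ))| = ((2:ℝ)^k) ^ (-(1/2:ℝ)) := abs_of_nonneg h0
  unfold haarI
  split_ifs <;> simp only [abs_mul, h, abs_one, abs_neg, mul_one, abs_zero] <;> first | exact le_refl _ | positivity

lemma haarI_eq_zero {k m : ℤ} {t : ℝ} (h : t ∉ dInt k m) : haarI k m t = 0 := by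
  rw [dInt, Set.mem_Ico] at h
  simp [haarI, h]

lemma dOsc_nonneg (f : ℝ → ℝ) (k m : ℤ) : 0 ≤ dOsc f k m := by
  unfold dOsc
  refine mul_nonneg (by positivity) (integral_nonneg fun t => abs_nonneg _)

lemma integral_haarI (k m : ℤ) : ∫ t in dInt k m, haarI k m t = 0 := by
  have hk := two_zpow_pos k
  have hAB : (2:ℝ)^k * m ≤ (2:ℝ)^k * (m + 1/2) := by nlinarith
  have hBC : (2:ℝ)^k * (m + 1/2) ≤ (2:ℝ)^k * (m + 1) := by nlinarith
  have hsplit : dInt k m = Set.Ico ((2:ℝ)^k * m) ((2:ℝ)^k * (m + 1/2))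
      ∪ Set.Ico ((2:ℝ)^k * (m + 1/2)) ((2:ℝ)^k * (m + 1)) :=
    (Set.Ico_union_Ico_eq_Ico hAB hBC).symm
  have h1 : Set.EqOn (haarI k m) (fun _ => ((2:ℝ)^k) ^ (-(1/2:ℝ)))
      (Set.Ico ((2:ℝ)^k * m) ((2:ℝ)^k * (m + 1/2))) := by
    rintro t ⟨ha, hb⟩
    have hc : t < (2:ℝ)^k * (m + 1) := lt_of_lt_of_le hb hBC
    show haarI k m t = _
    unfold haarI
    rw [if_pos ⟨ha, hc⟩, if_pos hb, mul_one]
  have h2 : Set.EqOn (haarI k m) (fun _ => -(((2:ℝ)^k) ^ (-(1/2:ℝ))))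
      (Set.Ico ((2:ℝ)^k * (m + 1/2)) ((2:ℝ)^k * (m + 1))) := by
    rintro t ⟨ha, hb⟩
    have hA : (2:ℝ)^k * m ≤ t := le_trans hAB ha
    have hB : ¬ t < (2:ℝ)^k * (m + 1/2) := not_lt.mpr ha
    show haarI k m t = _
    unfold haarI
    rw [if_pos ⟨hA, hb⟩, if_neg hB]
    ring
  rw [hsplit, setIntegral_union (Set.Ico_disjoint_Ico_same) measurableSet_Ico
      ((integrableOn_congr_fun h1 measurableSet_Ico).mpr
        ((integrableOn_const_iff).mpr (Or.inr measure_Ico_lt_top)))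
      ((integrableOn_congr_fun h2 measurableSet_Ico).mpr
        ((integrableOn_const_iff).mpr (Or.inr measure_Ico_lt_top))),
    setIntegral_congr_fun measurableSet_Ico h1,
    setIntegral_congr_fun measurableSet_Ico h2,
    setIntegral_const, setIntegral_const, measureReal_def, measureReal_def, Real.volume_Ico, Real.volume_Ico,
    ENNReal.toReal_ofReal (by nlinarith), ENNReal.toReal_ofReal (by nlinarith),
    smul_eq_mul, smul_eq_mul]
  ring

lemma abs_integral_haar_le (f : ℝ → ℝ) (hf : LocallyIntegrable f volume) (k m : ℤ) :
    |∫ t, f t * haarI k m t| ≤ ((2:ℝ)^k) ^ (-(1/2:ℝ)) * ((2:ℝ)^k * dOsc f k m) := by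
  have hk := two_zpow_pos k
  set c0 := ((2:ℝ)^k) ^ (-(1/2:ℝ)) with hc0
  have hc0nn : 0 ≤ c0 := Real.rpow_nonneg hk.le _
  set I := dInt k m with hI
  set avg := (volume I).toReal⁻¹ * ∫ u in I, f u with havg
  have hIm : MeasurableSet I := measurableSet_Ico
  have hvol : volume I = ENNReal.ofReal ((2:ℝ)^k) := volume_dInt k m
  have hvolr : (volume I).toReal = (2:ℝ)^k := by rw [hvol, ENNReal.toReal_ofReal hk.le]
  have hvfin : volume I < ⊤ := by rw [hvol]; exact ENNReal.ofReal_lt_top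
  have hfI : IntegrableOn f I volume := by
    have h : IntegrableOn f (Set.Icc ((2:ℝ)^k * m) ((2:ℝ)^k * ((m:ℝ)+1))) volume :=
      hf.integrableOn_isCompact isCompact_Icc
    exact h.mono_set Set.Ico_subset_Icc_self
  have hsub : IntegrableOn (fun t => f t - avg) I volume :=
    hfI.sub ((integrableOn_const_iff).mpr (Or.inr hvfin))
  have hmh := (measurable_haarI k m).aestronglyMeasurable (μ := volume.restrict I)
  have hbd : ∀ᵐ t ∂(volume.restrict I), ‖haarI k m t‖ ≤ c0 :=
    Filter.Eventually.of_forall fun t => by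
      rw [Real.norm_eq_abs, hc0]; exact abs_haarI_le k m t
  have hfh : IntegrableOn (fun t => haarI k m t * f t) I volume := Integrable.bdd_mul hfI hmh hbd
  have hsubh : IntegrableOn (fun t => haarI k m t * (f t - avg)) I volume :=
    Integrable.bdd_mul hsub hmh hbd
  have hhI : IntegrableOn (haarI k m) I volume :=
    Integrable.mono' ((integrableOn_const_iff).mpr (Or.inr hvfin)) hmh hbd
  have e1 : ∫ t, f t * haarI k m t = ∫ t in I, haarI k m t * f t := by
    rw [← setIntegral_eq_integral_of_forall_compl_eq_zero
      (s := I) (f := fun t => f t * haarI k m t)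
      (fun t ht => by show f t * haarI k m t = 0; rw [haarI_eq_zero ht, mul_zero])]
    exact setIntegral_congr_fun hIm fun t _ => mul_comm _ _
  have e2 : ∫ t in I, haarI k m t * f t = ∫ t in I, haarI k m t * (f t - avg) := by
    have h : ∫ t in I, haarI k m t * (f t - avg)
        = ∫ t in I, (haarI k m t * f t - haarI k m t * avg) :=
      setIntegral_congr_fun hIm fun t _ => by ring
    rw [h, integral_sub hfh (hhI.mul_const avg), integral_mul_const,
      integral_haarI, zero_mul, sub_zero]
  rw [e1, e2]
  calc |∫ t in I, haarI k m t * (f t - avg)|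
      ≤ ∫ t in I, |haarI k m t * (f t - avg)| := by
        simpa only [Real.norm_eq_abs] using
          norm_integral_le_integral_norm (μ := volume.restrict I)
            (fun t => haarI k m t * (f t - avg))
    _ ≤ ∫ t in I, c0 * |f t - avg| := by
        refine integral_mono hsubh.abs (hsub.abs.const_mul c0) fun t => ?_
        rw [abs_mul]
        exact mul_le_mul_of_nonneg_right (abs_haarI_le k m t) (abs_nonneg _)
    _ = c0 * ∫ t in I, |f t - avg| := integral_const_mul c0 _
    _ = c0 * ((2:ℝ)^k * dOsc f k m) := by
        congr 1
        rw [dOsc, ← hI, ← havg, hvolr, ← mul_assoc, mul_inv_cancel₀ hk.ne', one_mul]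


lemma dInt_subset_Ico (l : ℕ) (m : ℤ) (h0 : 0 ≤ m) (h1 : m < 2 ^ l) :
    dInt (-(l:ℤ)) m ⊆ Set.Ico (0:ℝ) 1 := by
  rintro x ⟨ha, hb⟩
  have hk := two_zpow_pos (-(l:ℤ))
  have hm0 : (0:ℝ) ≤ (m:ℝ) := by exact_mod_cast h0
  constructor
  · nlinarith
  · have hm1 : ((m:ℝ) + 1) ≤ (2:ℝ)^(l:ℕ) := by
      have h := Int.add_one_le_of_lt h1
      have : ((m+1 : ℤ):ℝ) ≤ (((2:ℤ)^l : ℤ):ℝ) := by exact_mod_cast h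
      push_cast at this
      linarith
    have hinv : (2:ℝ)^(-(l:ℤ)) * (2:ℝ)^(l:ℕ) = 1 := by
      rw [← zpow_natCast (2:ℝ) l, ← zpow_add₀ (two_ne_zero), neg_add_cancel, zpow_zero]
    calc x < (2:ℝ)^(-(l:ℤ)) * (m+1) := hb
      _ ≤ (2:ℝ)^(-(l:ℤ)) * (2:ℝ)^(l:ℕ) := by nlinarith
      _ = 1 := hinv

lemma mem_dInt_floor (l : ℕ) (x : ℝ) (hx : x ∈ Set.Ico (0:ℝ) 1) :
    x ∈ dInt (-(l:ℤ)) ⌊x / (2:ℝ)^(-(l:ℤ))⌋ ∧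
    0 ≤ ⌊x / (2:ℝ)^(-(l:ℤ))⌋ ∧ ⌊x / (2:ℝ)^(-(l:ℤ))⌋ < 2 ^ l := by
  obtain ⟨h0, h1⟩ := hx
  have hk := two_zpow_pos (-(l:ℤ))
  refine ⟨mem_dInt_iff.mpr rfl, Int.floor_nonneg.mpr (by positivity), ?_⟩
  rw [Int.floor_lt, div_lt_iff₀ hk]
  push_cast
  have hinv : (2:ℝ)^(l:ℕ) * (2:ℝ)^(-(l:ℤ)) = 1 := by
    rw [← zpow_natCast (2:ℝ) l, ← zpow_add₀ (two_ne_zero), add_neg_cancel, zpow_zero]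
  calc x < 1 := h1
    _ = (2:ℝ)^(l:ℕ) * (2:ℝ)^(-(l:ℤ)) := hinv.symm

lemma term_support {l : ℕ} {x : ℝ} {c : ℤ × ℤ}
    (hg : gcoef l c ≠ 0)
    (hi : (dInt c.1 c.2).indicator (fun _ => (1:ℝ)) x ≠ 0) :
    x ∈ Set.Ico (0:ℝ) 1 ∧ c = (-(l:ℤ), ⌊x / (2:ℝ)^(-(l:ℤ))⌋) := by
  have hcond : c.1 = -(l:ℤ) ∧ 0 ≤ c.2 ∧ c.2 < 2^l := by
    by_contra h; rw [gcoef, if_neg h] at hg; exact hg rfl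
  have hxm : x ∈ dInt c.1 c.2 := by
    by_contra h; rw [Set.indicator_of_notMem h] at hi; exact hi rfl
  rw [hcond.1] at hxm
  refine ⟨dInt_subset_Ico l c.2 hcond.2.1 hcond.2.2 hxm, ?_⟩
  have := mem_dInt_iff.mp hxm
  exact Prod.ext hcond.1 this.symm


/-- for `0 < q < 1 < p < ∞`, `1/q = 1/p + 1/r` and `g` as above,
`S_d(g) = χ_{[0,1)}` (so `‖g‖_{Ḣ_d^r(ℝ)} = 1`), while for every locally integrable `f` with
`‖f‖_{Λ̇_d^{1/q-1}(ℝ)} ≤ 1` one has `|π_g^t(f)| ≤ 2^{l(1-1/q)} χ_{[0,1)}` pointwise. -/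
theorem adjoint_paraproduct_example (p q r : ℝ) (hq0 : 0 < q) (hq1 : q < 1) (hp1 : 1 < p)
    (hr : 0 < r) (hpqr : 1 / q = 1 / p + 1 / r) (l : ℕ) (hl : 0 < l) :
    (∀ x : ℝ, sdg l x = (Set.Ico (0 : ℝ) 1).indicator (fun _ => (1 : ℝ)) x) ∧
    (∫⁻ x, ENNReal.ofReal (sdg l x) ^ r) ^ (1 / r) = 1 ∧
    ∀ f : ℝ → ℝ, LocallyIntegrable f volume →
      (∀ k m : ℤ, ((2 : ℝ) ^ k) ^ (-(1 / q - 1)) * dOsc f k m ≤ 1) →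
      ∀ x : ℝ, |piAdj l f x| ≤
        (2 : ℝ) ^ ((l : ℝ) * (1 - 1 / q)) *
          (Set.Ico (0 : ℝ) 1).indicator (fun _ => (1 : ℝ)) x := by
  have part1 : ∀ x : ℝ, sdg l x = (Set.Ico (0 : ℝ) 1).indicator (fun _ => (1 : ℝ)) x := by
    intro x
    by_cases hx : x ∈ Set.Ico (0:ℝ) 1
    · rw [Set.indicator_of_mem hx]
      obtain ⟨hmem, hm0, hm1⟩ := mem_dInt_floor l x hx
      set m₀ := ⌊x / (2:ℝ)^(-(l:ℤ))⌋ with hm₀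
      have hz : ∀ c : ℤ × ℤ, c ≠ (-(l:ℤ), m₀) →
          (gcoef l c) ^ 2 * (dInt c.1 c.2).indicator (fun _ => (1:ℝ)) x / (2:ℝ)^c.1 = 0 := by
        intro c hc
        by_cases hg : gcoef l c = 0
        · rw [hg]; ring
        by_cases hi : (dInt c.1 c.2).indicator (fun _ => (1:ℝ)) x = 0
        · rw [hi]; ring
        exact absurd (term_support hg hi).2 hc
      have hsum : (∑' c : ℤ × ℤ,
          (gcoef l c) ^ 2 * (dInt c.1 c.2).indicator (fun _ => (1:ℝ)) x / (2:ℝ)^c.1) = 1 := by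
        rw [tsum_eq_single ((-(l:ℤ), m₀) : ℤ × ℤ) hz]
        show (gcoef l (-(l:ℤ), m₀)) ^ 2 *
          (dInt (-(l:ℤ)) m₀).indicator (fun _ => (1:ℝ)) x / (2:ℝ)^(-(l:ℤ)) = 1
        rw [gcoef, if_pos ⟨rfl, hm0, hm1⟩, Set.indicator_of_mem hmem,
          Real.sq_sqrt (two_zpow_pos _).le, mul_one, div_self (two_zpow_pos _).ne']
      rw [sdg, hsum, Real.sqrt_one]
    · rw [Set.indicator_of_notMem hx]
      have hz : ∀ c : ℤ × ℤ,
          (gcoef l c) ^ 2 * (dInt c.1 c.2).indicator (fun _ => (1:ℝ)) x / (2:ℝ)^c.1 = 0 := by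
        intro c
        by_cases hg : gcoef l c = 0
        · rw [hg]; ring
        by_cases hi : (dInt c.1 c.2).indicator (fun _ => (1:ℝ)) x = 0
        · rw [hi]; ring
        exact absurd (term_support hg hi).1 hx
      rw [sdg, tsum_congr hz, tsum_zero, Real.sqrt_zero]
  refine ⟨part1, ?_, ?_⟩
  · have hpt : ∀ x : ℝ, ENNReal.ofReal (sdg l x) ^ r
        = (Set.Ico (0:ℝ) 1).indicator (fun _ => (1:ℝ≥0∞)) x := by
      intro x
      rw [part1 x]
      by_cases hx : x ∈ Set.Ico (0:ℝ) 1
      · rw [Set.indicator_of_mem hx, Set.indicator_of_mem hx, ENNReal.ofReal_one,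
          ENNReal.one_rpow]
      · rw [Set.indicator_of_notMem hx, Set.indicator_of_notMem hx, ENNReal.ofReal_zero,
          ENNReal.zero_rpow_of_pos hr]
    rw [lintegral_congr hpt, lintegral_indicator measurableSet_Ico, setLIntegral_one,
      Real.volume_Ico]
    norm_num
  · intro f hf hΛ x
    by_cases hx : x ∈ Set.Ico (0:ℝ) 1
    · rw [Set.indicator_of_mem hx, mul_one]
      obtain ⟨hmem, hm0, hm1⟩ := mem_dInt_floor l x hx
      set m₀ := ⌊x / (2:ℝ)^(-(l:ℤ))⌋ with hm₀
      have hz : ∀ c : ℤ × ℤ, c ≠ (-(l:ℤ), m₀) →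
          (∫ t, f t * haarI c.1 c.2 t) * gcoef l c *
            (dInt c.1 c.2).indicator (fun _ => (1:ℝ)) x / (2:ℝ)^c.1 = 0 := by
        intro c hc
        by_cases hg : gcoef l c = 0
        · rw [hg]; ring
        by_cases hi : (dInt c.1 c.2).indicator (fun _ => (1:ℝ)) x = 0
        · rw [hi]; ring
        exact absurd (term_support hg hi).2 hc
      rw [piAdj, tsum_eq_single ((-(l:ℤ), m₀) : ℤ × ℤ) hz]
      show |(∫ t, f t * haarI (-(l:ℤ)) m₀ t) * gcoef l (-(l:ℤ), m₀) *
        (dInt (-(l:ℤ)) m₀).indicator (fun _ => (1:ℝ)) x / (2:ℝ)^(-(l:ℤ))| ≤ _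
      rw [gcoef, if_pos ⟨rfl, hm0, hm1⟩, Set.indicator_of_mem hmem, mul_one]
      set a := (2:ℝ)^(-(l:ℤ)) with ha
      have hap : 0 < a := two_zpow_pos _
      have hb := abs_integral_haar_le f hf (-(l:ℤ)) m₀
      have hosc : dOsc f (-(l:ℤ)) m₀ ≤ a ^ (1/q - 1 : ℝ) := by
        have h := hΛ (-(l:ℤ)) m₀
        rw [← ha, Real.rpow_neg hap.le] at h
        have hpow : 0 < a ^ (1/q - 1 : ℝ) := Real.rpow_pos_of_pos hap _
        calc dOsc f (-(l:ℤ)) m₀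
            = a ^ (1/q-1:ℝ) * ((a ^ (1/q-1:ℝ))⁻¹ * dOsc f (-(l:ℤ)) m₀) := by
              field_simp
          _ ≤ a ^ (1/q-1:ℝ) * 1 := mul_le_mul_of_nonneg_left h hpow.le
          _ = a ^ (1/q-1:ℝ) := mul_one _
      have hA2 : |∫ t, f t * haarI (-(l:ℤ)) m₀ t|
          ≤ a ^ (-(1/2:ℝ)) * (a * a ^ (1/q-1:ℝ)) :=
        hb.trans (mul_le_mul_of_nonneg_left (mul_le_mul_of_nonneg_left hosc hap.le)
          (Real.rpow_nonneg hap.le _))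
      have key : a ^ (-(1/2:ℝ)) * (a * a ^ (1/q-1:ℝ)) * a ^ (1/2:ℝ) / a
          = a ^ (1/q - 1:ℝ) := by
        rw [div_eq_mul_inv, ← Real.rpow_neg_one a,
          show a * a ^ (1/q-1:ℝ) = a ^ (1 + (1/q-1):ℝ) from by
            rw [Real.rpow_add hap, Real.rpow_one],
          ← Real.rpow_add hap, ← Real.rpow_add hap, ← Real.rpow_add hap]
        congr 1
        ring
      have hfin : a ^ (1/q - 1 : ℝ) = (2:ℝ) ^ ((l:ℝ) * (1 - 1/q)) := by
        rw [ha, ← Real.rpow_intCast 2 (-(l:ℤ)),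
          ← Real.rpow_mul (by norm_num : (0:ℝ) ≤ 2)]
        congr 1
        push_cast
        ring
      calc |(∫ t, f t * haarI (-(l:ℤ)) m₀ t) * Real.sqrt a / a|
          = |∫ t, f t * haarI (-(l:ℤ)) m₀ t| * Real.sqrt a / a := by
            rw [abs_div, abs_mul, abs_of_nonneg (Real.sqrt_nonneg a), abs_of_pos hap]
        _ ≤ (a ^ (-(1/2:ℝ)) * (a * a ^ (1/q-1:ℝ))) * Real.sqrt a / a := by
            gcongr
        _ = a ^ (1/q - 1:ℝ) := by rw [Real.sqrt_eq_rpow]; exact key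
        _ = (2:ℝ) ^ ((l:ℝ) * (1 - 1/q)) := hfin
    · rw [Set.indicator_of_notMem hx, mul_zero]
      have hz : ∀ c : ℤ × ℤ,
          (∫ t, f t * haarI c.1 c.2 t) * gcoef l c *
            (dInt c.1 c.2).indicator (fun _ => (1:ℝ)) x / (2:ℝ)^c.1 = 0 := by
        intro c
        by_cases hg : gcoef l c = 0
        · rw [hg]; ring
        by_cases hi : (dInt c.1 c.2).indicator (fun _ => (1:ℝ)) x = 0
        · rw [hi]; ring
        exact absurd (term_support hg hi).1 hx
      rw [piAdj, tsum_congr hz, tsum_zero, abs_zero]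
end
end

section
/- Let 0 < s < r < ∞, let h ∈ L^r(ℝⁿ), and let C be an η-sparse family of cubes. Then ‖Σ_{Q∈C} (⟨|h|^s⟩_Q)^{1/s} χ_Q‖_{L^r(ℝⁿ)} ≲ ‖h‖_{L^r(ℝⁿ)}, with implicit constant depending on n, s, r, η. -/
open MeasureTheory ENNReal

noncomputable section

open NNReal


namespace SparseAux

variable {n : ℕ} {ι : Type*}

/-- explicit half-open cube -/
def cube (x : Fin n → ℝ) (l : ℝ) : Set (Fin n → ℝ) :=
  {y | ∀ j, x j ≤ y j ∧ y j < x j + l}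

lemma cube_eq_pi (x : Fin n → ℝ) (l : ℝ) :
    cube x l = Set.pi Set.univ fun j => Set.Ico (x j) (x j + l) := by
  ext y; simp [cube, Set.mem_pi, Set.mem_Ico]

lemma measurableSet_cube (x : Fin n → ℝ) (l : ℝ) : MeasurableSet (cube x l) := by
  rw [cube_eq_pi]; exact MeasurableSet.univ_pi fun j => measurableSet_Ico

lemma volume_cube (x : Fin n → ℝ) (l : ℝ) :
    volume (cube x l) = ENNReal.ofReal l ^ n := by
  rw [cube_eq_pi, volume_pi_pi]
  simp [Real.volume_Ico]

lemma volume_cube_pos (x : Fin n → ℝ) {l : ℝ} (hl : 0 < l) : volume (cube x l) ≠ 0 := by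
  rw [volume_cube]
  simp [pow_eq_zero_iff', ENNReal.ofReal_eq_zero, not_le, hl]

lemma volume_cube_ne_top (x : Fin n → ℝ) (l : ℝ) : volume (cube x l) ≠ ⊤ := by
  rw [volume_cube]
  exact ENNReal.pow_ne_top ENNReal.ofReal_ne_top

lemma volume_triple (x : Fin n → ℝ) {l : ℝ} (hl : 0 ≤ l) :
    volume (cube (fun j => x j - l) (3 * l)) = 3 ^ n * volume (cube x l) := by
  rw [volume_cube, volume_cube, ENNReal.ofReal_mul (by norm_num : (0:ℝ) ≤ 3),
    mul_pow]
  norm_num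

lemma subset_triple {x x' : Fin n → ℝ} {l l' : ℝ} (hl' : l' ≤ l)
    (hne : (cube x l ∩ cube x' l').Nonempty) :
    cube x' l' ⊆ cube (fun j => x j - l) (3 * l) := by
  obtain ⟨z, hz, hz'⟩ := hne
  intro y hy j
  have h1 := hz j
  have h2 := hz' j
  have h3 := hy j
  constructor <;> [skip; skip] <;> dsimp only <;> nlinarith [h1.1, h1.2, h2.1, h2.2, h3.1, h3.2]

lemma self_mem_cube (x : Fin n → ℝ) {l : ℝ} (hl : 0 < l) : x ∈ cube x l :=
  fun j => ⟨le_refl _, by linarith⟩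

open Classical in
/-- finite Vitali selection for cubes -/
lemma vitali_select (N : ℕ) (S : Finset ι) (hcard : S.card ≤ N)
    (x : ι → Fin n → ℝ) (l : ι → ℝ) (hl : ∀ i ∈ S, 0 < l i) :
    ∃ D ⊆ S, (↑D : Set ι).PairwiseDisjoint (fun i => cube (x i) (l i)) ∧
      ∀ i ∈ S, ∃ j ∈ D, cube (x i) (l i) ⊆ cube (fun m => x j m - l j) (3 * l j) := by
  induction N generalizing S with
  | zero =>
    have : S = ∅ := Finset.card_eq_zero.mp (Nat.le_zero.mp hcard)
    subst this
    exact ⟨∅, Finset.Subset.refl _, by simp, by simp⟩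
  | succ N ih =>
    rcases S.eq_empty_or_nonempty with rfl | hne
    · exact ⟨∅, Finset.Subset.refl _, by simp, by simp⟩
    obtain ⟨i₀, hi₀S, hmax⟩ := S.exists_max_image l hne
    set S' := S.filter (fun i => Disjoint (cube (x i) (l i)) (cube (x i₀) (l i₀))) with hS'
    have hi₀notS' : i₀ ∉ S' := by
      simp only [hS', Finset.mem_filter, not_and]
      intro _
      intro hd
      exact (hd.ne_of_mem (self_mem_cube _ (hl i₀ hi₀S)) (self_mem_cube _ (hl i₀ hi₀S))) rfl
    have hS'S : S' ⊆ S := Finset.filter_subset _ _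
    have hcard' : S'.card ≤ N := by
      have h1 : S' ⊆ S.erase i₀ := fun i hi =>
        Finset.mem_erase.mpr ⟨fun he => hi₀notS' (he ▸ hi), hS'S hi⟩
      calc S'.card ≤ (S.erase i₀).card := Finset.card_le_card h1
        _ = S.card - 1 := Finset.card_erase_of_mem hi₀S
        _ ≤ N := by omega
    obtain ⟨D', hD'S', hdisj', hcov'⟩ := ih S' hcard' (fun i hi => hl i (hS'S hi))
    refine ⟨insert i₀ D', ?_, ?_, ?_⟩
    · intro i hi
      rcases Finset.mem_insert.mp hi with rfl | hi
      · exact hi₀S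
      · exact hS'S (hD'S' hi)
    · rw [Finset.coe_insert]
      apply Set.pairwiseDisjoint_insert.mpr
      refine ⟨hdisj', fun j hj _ => ?_⟩
      have : j ∈ S' := hD'S' hj
      exact (Finset.mem_filter.mp this).2.symm
    · intro i hiS
      by_cases hd : Disjoint (cube (x i) (l i)) (cube (x i₀) (l i₀))
      · have hiS' : i ∈ S' := Finset.mem_filter.mpr ⟨hiS, hd⟩
        obtain ⟨j, hj, hsub⟩ := hcov' i hiS'
        exact ⟨j, Finset.mem_insert_of_mem hj, hsub⟩
      · refine ⟨i₀, Finset.mem_insert_self _ _, ?_⟩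
        apply subset_triple (hmax i hiS)
        rw [Set.not_disjoint_iff_nonempty_inter] at hd
        exact ⟨hd.choose, hd.choose_spec.2, hd.choose_spec.1⟩

/-- weak type bound on union of cubes -/
lemma weak_bound {g : (Fin n → ℝ) → ℝ≥0∞} (S : Finset ι)
    (x : ι → Fin n → ℝ) (l : ι → ℝ) (hl : ∀ i ∈ S, 0 < l i) {t : ℝ≥0∞}
    (ht : t ≠ 0) (ht' : t ≠ ⊤)
    (hQ : ∀ i ∈ S, t * volume (cube (x i) (l i)) ≤ ∫⁻ y in cube (x i) (l i), g y) :
    volume (⋃ i ∈ S, cube (x i) (l i)) ≤ 3 ^ n * (t⁻¹ * ∫⁻ y, g y) := by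
  obtain ⟨D, hDS, hdisj, hcov⟩ := vitali_select S.card S le_rfl x l hl
  have hsub : (⋃ i ∈ S, cube (x i) (l i)) ⊆
      ⋃ j ∈ D, cube (fun m => x j m - l j) (3 * l j) := by
    refine Set.iUnion₂_subset fun i hi => ?_
    obtain ⟨j, hj, hsubj⟩ := hcov i hi
    exact hsubj.trans (Set.subset_iUnion₂ (s := fun i (_ : i ∈ D) => cube (fun m => x i m - l i) (3 * l i)) j hj)
  calc volume (⋃ i ∈ S, cube (x i) (l i))
      ≤ volume (⋃ j ∈ D, cube (fun m => x j m - l j) (3 * l j)) := measure_mono hsub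
    _ ≤ ∑ j ∈ D, volume (cube (fun m => x j m - l j) (3 * l j)) :=
        measure_biUnion_finset_le _ _
    _ = 3 ^ n * ∑ j ∈ D, volume (cube (x j) (l j)) := by
        rw [Finset.mul_sum]
        exact Finset.sum_congr rfl fun j hj => volume_triple _ (hl j (hDS hj)).le
    _ ≤ 3 ^ n * (t⁻¹ * ∫⁻ y, g y) := by
        gcongr
        have hsum : ∑ j ∈ D, volume (cube (x j) (l j)) ≤
            t⁻¹ * ∑ j ∈ D, ∫⁻ y in cube (x j) (l j), g y := by
          rw [Finset.mul_sum]
          refine Finset.sum_le_sum fun j hj => ?_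
          have := hQ j (hDS hj)
          rw [← ENNReal.div_eq_inv_mul, ENNReal.le_div_iff_mul_le (Or.inl ht) (Or.inl ht'),
            mul_comm]
          exact this
        refine hsum.trans ?_
        gcongr
        rw [← lintegral_biUnion_finset hdisj (fun j _ => measurableSet_cube _ _)]
        exact setLIntegral_le_lintegral _ _

lemma two_rpow_ne_top (y : ℝ) : (2:ℝ≥0∞) ^ y ≠ ⊤ := by
  rw [show ((2:ℝ≥0∞)) = ((2:ℝ≥0):ℝ≥0∞) by norm_cast,
    ← ENNReal.coe_rpow_of_ne_zero (by norm_num)]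
  exact ENNReal.coe_ne_top

lemma two_rpow_ne_zero (y : ℝ) : (2:ℝ≥0∞) ^ y ≠ 0 :=
  (ENNReal.rpow_pos (by norm_num) (by norm_num)).ne'

lemma two_rpow_add (y z : ℝ) : (2:ℝ≥0∞) ^ (y + z) = 2 ^ y * 2 ^ z :=
  ENNReal.rpow_add y z (by norm_num) (by norm_num)

/-- geometric series bound -/
lemma geom_bound {q : ℝ} (hq : 0 < q) (K : Finset ℤ) (G : ℝ≥0∞) :
    ∑ m ∈ K, (2:ℝ≥0∞) ^ ((m:ℝ) * q) *
      (if (2:ℝ≥0∞) ^ ((m:ℝ) - 1) < G then (1:ℝ≥0∞) else 0)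
      ≤ (2:ℝ≥0∞) ^ q * (1 - (2:ℝ≥0∞) ^ (-q))⁻¹ * G ^ q := by
  classical
  have hsum : ∑ m ∈ K, (2:ℝ≥0∞) ^ ((m:ℝ) * q) *
      (if (2:ℝ≥0∞) ^ ((m:ℝ) - 1) < G then (1:ℝ≥0∞) else 0)
      = ∑ m ∈ K.filter (fun (m:ℤ) => (2:ℝ≥0∞) ^ ((m:ℝ) - 1) < G), (2:ℝ≥0∞) ^ ((m:ℝ) * q) := by
    rw [Finset.sum_filter]
    exact Finset.sum_congr rfl fun m _ => by split <;> simp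
  rw [hsum]
  set K' := K.filter (fun (m:ℤ) => (2:ℝ≥0∞) ^ ((m:ℝ) - 1) < G) with hK'
  rcases K'.eq_empty_or_nonempty with he | hne
  · rw [he]; simp
  by_cases hG : G = ⊤
  · have h1 : (2:ℝ≥0∞) ^ q * (1 - (2:ℝ≥0∞) ^ (-q))⁻¹ ≠ 0 := by
      apply mul_ne_zero (two_rpow_ne_zero q)
      rw [Ne, ENNReal.inv_eq_zero]
      exact (lt_of_le_of_lt tsub_le_self one_lt_top).ne
    rw [hG, ENNReal.top_rpow_of_pos hq, ENNReal.mul_top h1]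
    exact le_top
  set k₀ := K'.max' hne with hk₀
  have hk₀G : (2:ℝ≥0∞) ^ ((k₀:ℝ) - 1) < G := (Finset.mem_filter.mp (K'.max'_mem hne)).2
  have hle : ∀ m ∈ K', m ≤ k₀ := fun m hm => K'.le_max' m hm
  -- rewrite each term
  have hterm : ∀ m ∈ K', (2:ℝ≥0∞) ^ ((m:ℝ) * q)
      = (2:ℝ≥0∞) ^ ((k₀:ℝ) * q) * ((2:ℝ≥0∞) ^ (-q)) ^ ((k₀ - m).toNat) := by
    intro m hm
    have hnn : (0:ℤ) ≤ k₀ - m := by have := hle m hm; omega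
    have hcast : (((k₀ - m).toNat : ℝ)) = (k₀:ℝ) - (m:ℝ) := by
      rw [← Int.cast_natCast, Int.toNat_of_nonneg hnn]; push_cast; ring
    rw [← ENNReal.rpow_natCast ((2:ℝ≥0∞) ^ (-q)) _, ← ENNReal.rpow_mul, hcast,
      ← two_rpow_add]
    ring_nf
  rw [Finset.sum_congr rfl hterm, ← Finset.mul_sum]
  have hinj : ∀ m ∈ K', ∀ m' ∈ K', (k₀ - m).toNat = (k₀ - m').toNat → m = m' := by
    intro m hm m' hm' h
    have h1 := hle m hm; have h2 := hle m' hm'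
    omega
  have himg : ∑ m ∈ K', ((2:ℝ≥0∞) ^ (-q)) ^ ((k₀ - m).toNat)
      = ∑ j ∈ K'.image (fun (m:ℤ) => (k₀ - m).toNat), ((2:ℝ≥0∞) ^ (-q)) ^ j :=
    (Finset.sum_image hinj).symm
  rw [himg]
  have hgeo : ∑ j ∈ K'.image (fun (m:ℤ) => (k₀ - m).toNat), ((2:ℝ≥0∞) ^ (-q)) ^ j
      ≤ (1 - (2:ℝ≥0∞) ^ (-q))⁻¹ := by
    refine le_trans (ENNReal.sum_le_tsum _) ?_
    rw [ENNReal.tsum_geometric]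
  calc (2:ℝ≥0∞) ^ ((k₀:ℝ) * q) * ∑ j ∈ K'.image (fun (m:ℤ) => (k₀ - m).toNat), ((2:ℝ≥0∞) ^ (-q)) ^ j
      ≤ (2:ℝ≥0∞) ^ ((k₀:ℝ) * q) * (1 - (2:ℝ≥0∞) ^ (-q))⁻¹ := by gcongr
    _ ≤ ((2:ℝ≥0∞) ^ q * G ^ q) * (1 - (2:ℝ≥0∞) ^ (-q))⁻¹ := by
        gcongr
        have h1 : (2:ℝ≥0∞) ^ ((k₀:ℝ)) ≤ 2 * G := by
          rw [show ((k₀:ℝ)) = 1 + ((k₀:ℝ) - 1) by ring, two_rpow_add, ENNReal.rpow_one]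
          exact mul_le_mul_right hk₀G.le 2
        calc (2:ℝ≥0∞) ^ ((k₀:ℝ) * q) = ((2:ℝ≥0∞) ^ ((k₀:ℝ))) ^ q := by
              rw [← ENNReal.rpow_mul]
          _ ≤ (2 * G) ^ q := ENNReal.rpow_le_rpow h1 hq.le
          _ = (2:ℝ≥0∞) ^ q * G ^ q := ENNReal.mul_rpow_of_nonneg _ _ hq.le
    _ = (2:ℝ≥0∞) ^ q * (1 - (2:ℝ≥0∞) ^ (-q))⁻¹ * G ^ q := by ring



/-- Carleson-type embedding for finite sparse-like families. -/
lemma carleson (n : ℕ) {p : ℝ} (hp : 1 < p) :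
    ∃ C : ℝ≥0∞, 0 < C ∧ C ≠ ⊤ ∧
    ∀ (g : (Fin n → ℝ) → ℝ≥0∞), Measurable g →
    ∀ (ι : Type) (S : Finset ι) (x : ι → Fin n → ℝ) (l : ι → ℝ) (E : ι → Set (Fin n → ℝ)),
      (∀ i ∈ S, 0 < l i) → (∀ i ∈ S, MeasurableSet (E i)) →
      (∀ i ∈ S, E i ⊆ cube (x i) (l i)) →
      (↑S : Set ι).PairwiseDisjoint E →
      (∀ i ∈ S, (∫⁻ y in cube (x i) (l i), g y) ≠ ⊤) →
      ∑ i ∈ S, ((volume (cube (x i) (l i)))⁻¹ * ∫⁻ y in cube (x i) (l i), g y) ^ p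
          * volume (E i)
        ≤ C * ∫⁻ y, g y ^ p := by
  classical
  have hq : (0:ℝ) < p - 1 := by linarith
  have hp0 : (0:ℝ) < p := by linarith
  set Cq : ℝ≥0∞ := (2:ℝ≥0∞) ^ (p-1) * (1 - (2:ℝ≥0∞) ^ (-(p-1)))⁻¹ with hCq
  have hCq0 : Cq ≠ 0 := by
    apply mul_ne_zero (two_rpow_ne_zero _)
    rw [Ne, ENNReal.inv_eq_zero]
    exact (lt_of_le_of_lt tsub_le_self one_lt_top).ne
  have hCqt : Cq ≠ ⊤ := by
    apply ENNReal.mul_ne_top (two_rpow_ne_top _)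
    rw [Ne, ENNReal.inv_eq_top]
    exact (tsub_pos_of_lt
      (ENNReal.rpow_lt_one_of_one_lt_of_neg (by norm_num) (by linarith))).ne'
  have hGq : ∀ G : ℝ≥0∞, G ^ (p-1) * G = G ^ p := by
    intro G
    rcases eq_or_ne G 0 with rfl | h0
    · rw [ENNReal.zero_rpow_of_pos hq, ENNReal.zero_rpow_of_pos hp0, zero_mul]
    rcases eq_or_ne G ⊤ with rfl | ht
    · rw [ENNReal.top_rpow_of_pos hq, ENNReal.top_rpow_of_pos hp0, ENNReal.top_mul_top]
    · conv_rhs => rw [show p = (p-1) + 1 by ring]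
      rw [ENNReal.rpow_add _ _ h0 ht, ENNReal.rpow_one]
  refine ⟨(3:ℝ≥0∞) ^ n * (2:ℝ≥0∞) ^ (p+1) * Cq, ?_, ?_, ?_⟩
  · exact ENNReal.mul_pos (mul_ne_zero (pow_ne_zero _ (by norm_num)) (two_rpow_ne_zero _)) hCq0
  · exact ENNReal.mul_ne_top (ENNReal.mul_ne_top
      (ENNReal.pow_ne_top (by norm_num)) (two_rpow_ne_top _)) hCqt
  intro g hg ι S x l E hl hE hEQ hdisj hfin
  set avg := fun i => (volume (cube (x i) (l i)))⁻¹ * ∫⁻ y in cube (x i) (l i), g y with havg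
  have havgt : ∀ i ∈ S, avg i ≠ ⊤ := fun i hi =>
    ENNReal.mul_ne_top (ENNReal.inv_ne_top.mpr (volume_cube_pos _ (hl i hi))) (hfin i hi)
  set S1 := S.filter (fun i => avg i ≠ 0) with hS1
  have hS1S : S1 ⊆ S := Finset.filter_subset _ _
  have hstep0 : ∑ i ∈ S, avg i ^ p * volume (E i)
      = ∑ i ∈ S1, avg i ^ p * volume (E i) := by
    refine (Finset.sum_subset hS1S fun i hi hni => ?_).symm
    have h0 : avg i = 0 := by
      by_contra hne; exact hni (Finset.mem_filter.mpr ⟨hi, hne⟩)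
    rw [h0, ENNReal.zero_rpow_of_pos hp0, zero_mul]
  set k : ι → ℤ := fun i => Int.log 2 (avg i).toNNReal with hkdef
  have hlow : ∀ i ∈ S1, (2:ℝ≥0∞) ^ ((k i : ℝ)) ≤ avg i := by
    intro i hi
    obtain ⟨hiS, hne⟩ := Finset.mem_filter.mp hi
    have hA : (avg i).toNNReal ≠ 0 := ENNReal.toNNReal_ne_zero.mpr ⟨hne, havgt i hiS⟩
    have h1 : ((2:ℝ≥0)) ^ (k i) ≤ (avg i).toNNReal :=
      Int.zpow_log_le_self (by norm_num) hA.bot_lt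
    calc (2:ℝ≥0∞) ^ ((k i:ℝ)) = ((((2:ℝ≥0)) ^ (k i) : ℝ≥0) : ℝ≥0∞) := by
          rw [ENNReal.coe_zpow (by norm_num), ENNReal.rpow_intCast]; norm_cast
      _ ≤ ((avg i).toNNReal : ℝ≥0∞) := ENNReal.coe_le_coe.mpr h1
      _ = avg i := ENNReal.coe_toNNReal (havgt i hiS)
  have hhigh : ∀ i ∈ S1, avg i ≤ (2:ℝ≥0∞) ^ ((k i : ℝ) + 1) := by
    intro i hi
    obtain ⟨hiS, hne⟩ := Finset.mem_filter.mp hi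
    have h1 : (avg i).toNNReal < ((2:ℝ≥0)) ^ (k i + 1) :=
      Int.lt_zpow_succ_log_self (by norm_num) _
    calc avg i = ((avg i).toNNReal : ℝ≥0∞) := (ENNReal.coe_toNNReal (havgt i hiS)).symm
      _ ≤ (((2:ℝ≥0) ^ (k i + 1) : ℝ≥0) : ℝ≥0∞) := ENNReal.coe_le_coe.mpr h1.le
      _ = (2:ℝ≥0∞) ^ ((k i:ℝ) + 1) := by
          rw [ENNReal.coe_zpow (by norm_num), ← ENNReal.rpow_intCast]
          norm_cast
  set K := S1.image k with hK
  have hfib : ∑ i ∈ S1, avg i ^ p * volume (E i)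
      = ∑ m ∈ K, ∑ i ∈ S1.filter (fun i => k i = m), avg i ^ p * volume (E i) :=
    (Finset.sum_fiberwise_of_maps_to (fun i hi => Finset.mem_image_of_mem k hi) _).symm
  have hfiber : ∀ m ∈ K, ∑ i ∈ S1.filter (fun i => k i = m), avg i ^ p * volume (E i)
      ≤ (3:ℝ≥0∞)^n * (2:ℝ≥0∞)^(p+1) * ((2:ℝ≥0∞) ^ ((m:ℝ)*(p-1)) *
          ∫⁻ y, ({z | (2:ℝ≥0∞) ^ ((m:ℝ)-1) < g z}.indicator (fun _ => (1:ℝ≥0∞)) y) * g y) := by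
    intro m hm
    set T := S1.filter (fun i => k i = m) with hT
    have hTS1 : T ⊆ S1 := Finset.filter_subset _ _
    have hTS : T ⊆ S := hTS1.trans hS1S
    set t : ℝ≥0∞ := (2:ℝ≥0∞) ^ ((m:ℝ) - 1) with htdef
    set gm := fun y => ({z | t < g z}.indicator (fun _ => (1:ℝ≥0∞)) y) * g y with hgm
    have hgm_meas : Measurable gm :=
      (Measurable.indicator measurable_const (measurableSet_lt measurable_const hg)).mul hg
    have hkey : ∀ i ∈ T, t * volume (cube (x i) (l i)) ≤ ∫⁻ y in cube (x i) (l i), gm y := by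
      intro i hi
      have hkm : k i = m := (Finset.mem_filter.mp hi).2
      have hiS : i ∈ S := hTS hi
      have hμ0 : volume (cube (x i) (l i)) ≠ 0 := volume_cube_pos _ (hl i hiS)
      have hμt : volume (cube (x i) (l i)) ≠ ⊤ := volume_cube_ne_top _ _
      have h2g : ∀ y, g y ≤ gm y + t := by
        intro y
        by_cases hy : t < g y
        · have he : gm y = g y := by
            rw [hgm]; dsimp only
            rw [Set.indicator_of_mem (show y ∈ {z | t < g z} from hy), one_mul]
          rw [he]; exact le_self_add
        · exact (not_lt.mp hy).trans le_add_self
      have hintg : ∫⁻ y in cube (x i) (l i), g y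
          ≤ (∫⁻ y in cube (x i) (l i), gm y) + t * volume (cube (x i) (l i)) := by
        calc ∫⁻ y in cube (x i) (l i), g y ≤ ∫⁻ y in cube (x i) (l i), gm y + t :=
              lintegral_mono h2g
          _ = (∫⁻ y in cube (x i) (l i), gm y) + t * volume (cube (x i) (l i)) := by
              rw [lintegral_add_right _ measurable_const, setLIntegral_const]
      have h2m : (2:ℝ≥0∞) ^ ((m:ℝ)) = 2 * t := by
        have hh : (2:ℝ≥0∞) ^ ((m:ℝ)) = 2 ^ (1:ℝ) * 2 ^ ((m:ℝ)-1) := by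
          rw [← two_rpow_add]; congr 1; ring
        rw [hh, ENNReal.rpow_one, htdef]
      have hlowi : 2 * t * volume (cube (x i) (l i)) ≤ ∫⁻ y in cube (x i) (l i), g y := by
        rw [← h2m]
        calc (2:ℝ≥0∞)^((m:ℝ)) * volume (cube (x i) (l i))
            ≤ avg i * volume (cube (x i) (l i)) := by
              gcongr
              rw [← hkm]
              exact hlow i (hTS1 hi)
          _ = ∫⁻ y in cube (x i) (l i), g y := by
              rw [havg]; dsimp only
              rw [mul_comm ((volume (cube (x i) (l i)))⁻¹) _, mul_assoc,
                ENNReal.inv_mul_cancel hμ0 hμt, mul_one]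
      have htμt : t * volume (cube (x i) (l i)) ≠ ⊤ :=
        ENNReal.mul_ne_top (two_rpow_ne_top _) hμt
      have hfin2 : t * volume (cube (x i) (l i)) + t * volume (cube (x i) (l i))
          ≤ (∫⁻ y in cube (x i) (l i), gm y) + t * volume (cube (x i) (l i)) := by
        rw [← two_mul, ← mul_assoc]
        exact hlowi.trans hintg
      exact (ENNReal.add_le_add_iff_right htμt).mp hfin2
    have hwk := weak_bound T x l (fun i hi => hl i (hTS hi)) (two_rpow_ne_zero _)
      (two_rpow_ne_top _) hkey
    have halg : (2:ℝ≥0∞)^(((m:ℝ)+1)*p) * t⁻¹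
        = (2:ℝ≥0∞)^(p+1) * (2:ℝ≥0∞)^((m:ℝ)*(p-1)) := by
      rw [htdef, ← ENNReal.rpow_neg, ← two_rpow_add, ← two_rpow_add]
      congr 1; ring
    calc ∑ i ∈ T, avg i ^ p * volume (E i)
        ≤ ∑ i ∈ T, (2:ℝ≥0∞) ^ (((m:ℝ)+1)*p) * volume (E i) := by
          refine Finset.sum_le_sum fun i hi => ?_
          gcongr
          have h1 := hhigh i (hTS1 hi)
          have hkm : k i = m := (Finset.mem_filter.mp hi).2
          rw [hkm] at h1
          calc avg i ^ p ≤ ((2:ℝ≥0∞) ^ ((m:ℝ)+1)) ^ p := ENNReal.rpow_le_rpow h1 hp0.le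
            _ = (2:ℝ≥0∞) ^ (((m:ℝ)+1)*p) := (ENNReal.rpow_mul _ _ _).symm
      _ = (2:ℝ≥0∞) ^ (((m:ℝ)+1)*p) * ∑ i ∈ T, volume (E i) := by rw [Finset.mul_sum]
      _ = (2:ℝ≥0∞) ^ (((m:ℝ)+1)*p) * volume (⋃ i ∈ T, E i) := by
          rw [measure_biUnion_finset (hdisj.subset (Finset.coe_subset.mpr hTS))
            (fun i hi => hE i (hTS hi))]
      _ ≤ (2:ℝ≥0∞) ^ (((m:ℝ)+1)*p) * volume (⋃ i ∈ T, cube (x i) (l i)) :=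
          mul_le_mul_right (measure_mono (Set.iUnion₂_mono fun i hi => hEQ i (hTS hi))) _
      _ ≤ (2:ℝ≥0∞) ^ (((m:ℝ)+1)*p) * ((3:ℝ≥0∞)^n * (t⁻¹ * ∫⁻ y, gm y)) :=
          mul_le_mul_right hwk _
      _ = ((2:ℝ≥0∞)^(((m:ℝ)+1)*p) * t⁻¹) * ((3:ℝ≥0∞)^n * ∫⁻ y, gm y) := by ring
      _ = ((2:ℝ≥0∞)^(p+1) * (2:ℝ≥0∞)^((m:ℝ)*(p-1))) * ((3:ℝ≥0∞)^n * ∫⁻ y, gm y) := by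
          rw [halg]
      _ = (3:ℝ≥0∞)^n * (2:ℝ≥0∞)^(p+1) * ((2:ℝ≥0∞) ^ ((m:ℝ)*(p-1)) * ∫⁻ y, gm y) := by
          ring
  rw [hstep0, hfib]
  have hmeas_ind : ∀ m : ℤ, Measurable fun y =>
      ({z | (2:ℝ≥0∞) ^ ((m:ℝ)-1) < g z}.indicator (fun _ => (1:ℝ≥0∞)) y) * g y :=
    fun m => (Measurable.indicator measurable_const
      (measurableSet_lt measurable_const hg)).mul hg
  calc ∑ m ∈ K, ∑ i ∈ S1.filter (fun i => k i = m), avg i ^ p * volume (E i)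
      ≤ ∑ m ∈ K, (3:ℝ≥0∞)^n * (2:ℝ≥0∞)^(p+1) * ((2:ℝ≥0∞) ^ ((m:ℝ)*(p-1)) *
          ∫⁻ y, ({z | (2:ℝ≥0∞) ^ ((m:ℝ)-1) < g z}.indicator (fun _ => (1:ℝ≥0∞)) y) * g y) :=
        Finset.sum_le_sum hfiber
    _ = (3:ℝ≥0∞)^n * (2:ℝ≥0∞)^(p+1) * ∑ m ∈ K, ((2:ℝ≥0∞) ^ ((m:ℝ)*(p-1)) *
          ∫⁻ y, ({z | (2:ℝ≥0∞) ^ ((m:ℝ)-1) < g z}.indicator (fun _ => (1:ℝ≥0∞)) y) * g y) := by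
        rw [← Finset.mul_sum]
    _ ≤ (3:ℝ≥0∞)^n * (2:ℝ≥0∞)^(p+1) * (Cq * ∫⁻ y, g y ^ p) := by
        gcongr
        have h1 : ∀ m ∈ K, (2:ℝ≥0∞)^((m:ℝ)*(p-1)) *
            (∫⁻ y, ({z | (2:ℝ≥0∞) ^ ((m:ℝ)-1) < g z}.indicator (fun _ => (1:ℝ≥0∞)) y) * g y)
            = ∫⁻ y, (2:ℝ≥0∞)^((m:ℝ)*(p-1)) *
              (({z | (2:ℝ≥0∞) ^ ((m:ℝ)-1) < g z}.indicator (fun _ => (1:ℝ≥0∞)) y) * g y) :=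
          fun m _ => (lintegral_const_mul _ (hmeas_ind m)).symm
        rw [Finset.sum_congr rfl h1, ← lintegral_finset_sum _ (fun m _ =>
          (Measurable.const_mul (hmeas_ind m) _))]
        have hpt : ∀ y, ∑ m ∈ K, (2:ℝ≥0∞)^((m:ℝ)*(p-1)) *
            (({z | (2:ℝ≥0∞) ^ ((m:ℝ)-1) < g z}.indicator (fun _ => (1:ℝ≥0∞)) y) * g y)
            ≤ Cq * g y ^ p := by
          intro y
          have h2 : ∑ m ∈ K, (2:ℝ≥0∞)^((m:ℝ)*(p-1)) *
              (({z | (2:ℝ≥0∞) ^ ((m:ℝ)-1) < g z}.indicator (fun _ => (1:ℝ≥0∞)) y) * g y)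
              = (∑ m ∈ K, (2:ℝ≥0∞)^((m:ℝ)*(p-1)) *
                (if (2:ℝ≥0∞) ^ ((m:ℝ)-1) < g y then (1:ℝ≥0∞) else 0)) * g y := by
            rw [Finset.sum_mul]
            refine Finset.sum_congr rfl fun m _ => ?_
            rw [Set.indicator_apply]
            simp only [Set.mem_setOf_eq]
            ring
          rw [h2]
          calc (∑ m ∈ K, (2:ℝ≥0∞)^((m:ℝ)*(p-1)) *
                (if (2:ℝ≥0∞) ^ ((m:ℝ)-1) < g y then (1:ℝ≥0∞) else 0)) * g y
              ≤ ((2:ℝ≥0∞) ^ (p-1) * (1 - (2:ℝ≥0∞) ^ (-(p-1)))⁻¹ * g y ^ (p-1)) * g y :=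
                mul_le_mul_left (geom_bound hq K (g y)) _
            _ = Cq * (g y ^ (p-1) * g y) := by rw [hCq]; ring
            _ = Cq * g y ^ p := by rw [hGq (g y)]
        refine le_trans (lintegral_mono hpt) ?_
        rw [lintegral_const_mul _ (hg.pow_const _)]
    _ = (3:ℝ≥0∞) ^ n * (2:ℝ≥0∞) ^ (p+1) * Cq * ∫⁻ y, g y ^ p := by ring

lemma rpow_sub_one_mul {p : ℝ} (hp : 1 < p) (G : ℝ≥0∞) : G ^ (p-1) * G = G ^ p := by
  have hq : (0:ℝ) < p - 1 := by linarith
  have hp0 : (0:ℝ) < p := by linarith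
  rcases eq_or_ne G 0 with rfl | h0
  · rw [ENNReal.zero_rpow_of_pos hq, ENNReal.zero_rpow_of_pos hp0, zero_mul]
  rcases eq_or_ne G ⊤ with rfl | ht
  · rw [ENNReal.top_rpow_of_pos hq, ENNReal.top_rpow_of_pos hp0, ENNReal.top_mul_top]
  · conv_rhs => rw [show p = (p-1) + 1 by ring]
    rw [ENNReal.rpow_add _ _ h0 ht, ENNReal.rpow_one]

section helpers

variable {ι : Type*} {α : Type*}

lemma sum_indicator_eq_single (T : Finset ι) (E : ι → Set α)
    (hdisj : (↑T : Set ι).PairwiseDisjoint E) (c : ι → ℝ≥0∞) {y : α} {i₀ : ι}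
    (hi₀ : i₀ ∈ T) (hy : y ∈ E i₀) :
    ∑ i ∈ T, c i * (E i).indicator (fun _ => (1:ℝ≥0∞)) y = c i₀ := by
  rw [Finset.sum_eq_single_of_mem i₀ hi₀ (fun j hj hne => ?_)]
  · rw [Set.indicator_of_mem hy, mul_one]
  · have hd : Disjoint (E j) (E i₀) :=
      hdisj (Finset.mem_coe.mpr hj) (Finset.mem_coe.mpr hi₀) hne
    rw [Set.indicator_of_notMem (fun hyj => Set.disjoint_left.mp hd hyj hy), mul_zero]

lemma sum_indicator_mul (T : Finset ι) (E : ι → Set α)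
    (hdisj : (↑T : Set ι).PairwiseDisjoint E) (c d : ι → ℝ≥0∞) (y : α) :
    (∑ i ∈ T, c i * (E i).indicator (fun _ => (1:ℝ≥0∞)) y) *
      (∑ i ∈ T, d i * (E i).indicator (fun _ => (1:ℝ≥0∞)) y)
      = ∑ i ∈ T, (c i * d i) * (E i).indicator (fun _ => (1:ℝ≥0∞)) y := by
  classical
  by_cases hy : ∃ i ∈ T, y ∈ E i
  · obtain ⟨i₀, hi₀, hyi₀⟩ := hy
    rw [sum_indicator_eq_single T E hdisj c hi₀ hyi₀,
      sum_indicator_eq_single T E hdisj d hi₀ hyi₀,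
      sum_indicator_eq_single T E hdisj _ hi₀ hyi₀]
  · push_neg at hy
    have hz : ∀ (e : ι → ℝ≥0∞),
        ∑ i ∈ T, e i * (E i).indicator (fun _ => (1:ℝ≥0∞)) y = 0 := fun e =>
      Finset.sum_eq_zero fun i hi => by rw [Set.indicator_of_notMem (hy i hi), mul_zero]
    rw [hz, hz, hz, zero_mul]

lemma rpow_sum_indicator (T : Finset ι) (E : ι → Set α)
    (hdisj : (↑T : Set ι).PairwiseDisjoint E) (c : ι → ℝ≥0∞) {p : ℝ} (hp : 0 < p) (y : α) :
    (∑ i ∈ T, c i * (E i).indicator (fun _ => (1:ℝ≥0∞)) y) ^ p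
      = ∑ i ∈ T, (c i ^ p) * (E i).indicator (fun _ => (1:ℝ≥0∞)) y := by
  classical
  by_cases hy : ∃ i ∈ T, y ∈ E i
  · obtain ⟨i₀, hi₀, hyi₀⟩ := hy
    rw [sum_indicator_eq_single T E hdisj c hi₀ hyi₀,
      sum_indicator_eq_single T E hdisj _ hi₀ hyi₀]
  · push_neg at hy
    have hz : ∀ (e : ι → ℝ≥0∞),
        ∑ i ∈ T, e i * (E i).indicator (fun _ => (1:ℝ≥0∞)) y = 0 := fun e =>
      Finset.sum_eq_zero fun i hi => by rw [Set.indicator_of_notMem (hy i hi), mul_zero]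
    rw [hz, hz, ENNReal.zero_rpow_of_pos hp]

lemma rpow_mul_indicator {p : ℝ} (hp : 0 < p) (a : ℝ≥0∞) (s : Set α) (y : α) :
    (a * s.indicator (fun _ => (1:ℝ≥0∞)) y) ^ p
      = a ^ p * s.indicator (fun _ => (1:ℝ≥0∞)) y := by
  by_cases hy : y ∈ s
  · simp [Set.indicator_of_mem hy]
  · simp [Set.indicator_of_notMem hy, ENNReal.zero_rpow_of_pos hp]

lemma rpow_sum_le {p : ℝ} (hp0 : 0 < p) (hp1 : p ≤ 1) (T : Finset ι) (f : ι → ℝ≥0∞) :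
    (∑ i ∈ T, f i) ^ p ≤ ∑ i ∈ T, f i ^ p := by
  classical
  induction T using Finset.induction with
  | empty => simp [ENNReal.zero_rpow_of_pos hp0]
  | insert _ _ hni ih =>
    rw [Finset.sum_insert hni, Finset.sum_insert hni]
    exact le_trans (ENNReal.rpow_add_le_add_rpow _ _ hp0.le hp1) (by gcongr)

end helpers

/-- Main estimate for finite families. -/
lemma finite_bound (n : ℕ) (s r : ℝ) (hs : 0 < s) (hsr : s < r) (η : ℝ≥0∞)
    (hη : 0 < η) (hη1 : η < 1) :
    ∃ C : ℝ≥0∞, 0 < C ∧ C ≠ ⊤ ∧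
      ∀ (f : (Fin n → ℝ) → ℝ≥0∞), Measurable f → (∫⁻ y, f y ^ r) ≠ ⊤ →
      ∀ (ι : Type) (S : Finset ι) (x : ι → Fin n → ℝ) (l : ι → ℝ) (E : ι → Set (Fin n → ℝ)),
        (∀ i, 0 < l i) → (∀ i, MeasurableSet (E i)) →
        (∀ i, E i ⊆ cube (x i) (l i)) →
        (∀ i, η * volume (cube (x i) (l i)) ≤ volume (E i)) →
        Pairwise (Function.onFun Disjoint E) →
        ∫⁻ y, (∑ i ∈ S,
            ((volume (cube (x i) (l i)))⁻¹ * ∫⁻ z in cube (x i) (l i), f z ^ s) ^ (1/s)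
            * (cube (x i) (l i)).indicator (fun _ => (1:ℝ≥0∞)) y) ^ r
          ≤ C * ∫⁻ y, f y ^ r := by
  classical
  have hr0 : (0:ℝ) < r := hs.trans hsr
  have hrs1 : 1 < r / s := (one_lt_div hs).mpr hsr
  obtain ⟨CA, hCA0, hCAt, hCA⟩ := carleson n hrs1
  have hη0 : η ≠ 0 := hη.ne'
  have hηt : η ≠ ⊤ := (hη1.trans one_lt_top).ne
  -- facts shared by both cases, stated as lemmas-in-proof via `have`?  We inline in each case.
  rcases le_or_gt r 1 with hr1 | hr1
  · -- case r ≤ 1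
    refine ⟨η⁻¹ * CA, ENNReal.mul_pos (ENNReal.inv_ne_zero.mpr hηt) hCA0.ne', 
      ENNReal.mul_ne_top (ENNReal.inv_ne_top.mpr hη0) hCAt, ?_⟩
    intro f hf hIr ι S x l E hl hE hEQ hvol hdisj
    set fs := fun y => f y ^ s with hfs
    have hfs_meas : Measurable fs := hf.pow_const _
    have hfsr : ∀ y, fs y ^ (r/s) = f y ^ r := fun y => by
      rw [hfs]; dsimp only
      rw [← ENNReal.rpow_mul]
      congr 1
      field_simp
    have hQint : ∀ i, (∫⁻ z in cube (x i) (l i), fs z) ≠ ⊤ := by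
      intro i
      have hpq : (r/s).HolderConjugate (Real.conjExponent (r/s)) :=
        Real.HolderConjugate.conjExponent hrs1
      have hh : ∫⁻ z in cube (x i) (l i), fs z
          ≤ (∫⁻ z in cube (x i) (l i), fs z ^ (r/s)) ^ (1/(r/s)) *
            (∫⁻ z in cube (x i) (l i), ((1:ℝ≥0∞)) ^ (Real.conjExponent (r/s)))
              ^ (1/(Real.conjExponent (r/s))) := by
        have := ENNReal.lintegral_mul_le_Lp_mul_Lq (volume.restrict (cube (x i) (l i))) hpq
          hfs_meas.aemeasurable (aemeasurable_const (b := (1:ℝ≥0∞)))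
        simpa using this
      refine ne_top_of_le_ne_top ?_ hh
      apply ENNReal.mul_ne_top
      · apply ENNReal.rpow_ne_top_of_nonneg hpq.one_div_nonneg
        have h1 : ∫⁻ z in cube (x i) (l i), fs z ^ (r/s)
            = ∫⁻ z in cube (x i) (l i), f z ^ r := lintegral_congr fun z => hfsr z
        rw [h1]
        exact ne_top_of_le_ne_top hIr (setLIntegral_le_lintegral _ _)
      · apply ENNReal.rpow_ne_top_of_nonneg hpq.symm.one_div_nonneg
        have h2 : ∫⁻ _ in cube (x i) (l i), ((1:ℝ≥0∞)) ^ (Real.conjExponent (r/s))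
            = volume (cube (x i) (l i)) := by
          simp
        rw [h2]
        exact volume_cube_ne_top _ _
    set avg := fun i => (volume (cube (x i) (l i)))⁻¹ * ∫⁻ z in cube (x i) (l i), fs z
      with havgdef
    have havgt : ∀ i, avg i ≠ ⊤ := fun i => ENNReal.mul_ne_top
      (ENNReal.inv_ne_top.mpr (volume_cube_pos _ (hl i))) (hQint i)
    have hone_div : (1/s) * r = r / s := by ring
    have hQmeas : ∀ i, Measurable ((cube (x i) (l i)).indicator (fun _ => (1:ℝ≥0∞))) :=
      fun i => measurable_const.indicator (measurableSet_cube _ _)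
    have hdisjS : (↑S : Set ι).PairwiseDisjoint E := hdisj.set_pairwise _
    show (∫⁻ y, (∑ i ∈ S,
        avg i ^ (1/s) * (cube (x i) (l i)).indicator (fun _ => (1:ℝ≥0∞)) y) ^ r)
      ≤ η⁻¹ * CA * ∫⁻ y, f y ^ r
    calc ∫⁻ y, (∑ i ∈ S,
            avg i ^ (1/s) * (cube (x i) (l i)).indicator (fun _ => (1:ℝ≥0∞)) y) ^ r
        ≤ ∫⁻ y, ∑ i ∈ S,
            (avg i ^ (1/s)) ^ r * (cube (x i) (l i)).indicator (fun _ => (1:ℝ≥0∞)) y := by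
          apply lintegral_mono
          intro y
          refine le_trans (rpow_sum_le hr0 hr1 S _) (le_of_eq ?_)
          exact Finset.sum_congr rfl fun i _ => rpow_mul_indicator hr0 _ _ _
      _ = ∑ i ∈ S, (avg i ^ (1/s)) ^ r * volume (cube (x i) (l i)) := by
          rw [lintegral_finset_sum _ (fun i _ => (hQmeas i).const_mul _)]
          refine Finset.sum_congr rfl fun i _ => ?_
          rw [lintegral_const_mul _ (hQmeas i), lintegral_indicator (measurableSet_cube _ _),
            setLIntegral_one]
      _ ≤ ∑ i ∈ S, (avg i ^ (1/s)) ^ r * (η⁻¹ * volume (E i)) := by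
          refine Finset.sum_le_sum fun i _ => ?_
          gcongr
          rw [← one_mul (volume (cube (x i) (l i))), ← ENNReal.inv_mul_cancel hη0 hηt,
            mul_assoc]
          exact mul_le_mul_right (hvol i) _
      _ = η⁻¹ * ∑ i ∈ S, avg i ^ (r/s) * volume (E i) := by
          rw [Finset.mul_sum]
          refine Finset.sum_congr rfl fun i _ => ?_
          rw [← ENNReal.rpow_mul, hone_div]
          ring
      _ ≤ η⁻¹ * (CA * ∫⁻ y, fs y ^ (r/s)) := by
          refine mul_le_mul_right ?_ _
          exact hCA fs hfs_meas ι S x l E (fun i _ => hl i) (fun i _ => hE i)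
            (fun i _ => hEQ i) hdisjS (fun i _ => hQint i)
      _ = η⁻¹ * CA * ∫⁻ y, f y ^ r := by
          rw [lintegral_congr (fun y => hfsr y), mul_assoc]
  · -- case 1 < r
    have hr'1 : 1 < r / (r-1) := (one_lt_div (by linarith)).mpr (by linarith)
    have hr'0 : (0:ℝ) < r / (r-1) := lt_trans zero_lt_one hr'1
    obtain ⟨CB, hCB0, hCBt, hCB⟩ := carleson n hr'1
    have hconj : r.HolderConjugate (r/(r-1)) :=
      (Real.holderConjugate_iff_eq_conjExponent hr1).mpr rfl
    refine ⟨(η⁻¹ * CA ^ (1/r) * CB ^ (1/(r/(r-1)))) ^ r, ?_, ?_, ?_⟩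
    · apply ENNReal.rpow_pos
      · exact ENNReal.mul_pos (mul_ne_zero (ENNReal.inv_ne_zero.mpr hηt)
          (ENNReal.rpow_pos hCA0 hCAt).ne') (ENNReal.rpow_pos hCB0 hCBt).ne'
      · exact ENNReal.mul_ne_top (ENNReal.mul_ne_top (ENNReal.inv_ne_top.mpr hη0)
          (ENNReal.rpow_ne_top_of_nonneg (by positivity) hCAt))
          (ENNReal.rpow_ne_top_of_nonneg (by positivity) hCBt)
    · exact ENNReal.rpow_ne_top_of_nonneg hr0.le
        (ENNReal.mul_ne_top (ENNReal.mul_ne_top (ENNReal.inv_ne_top.mpr hη0)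
          (ENNReal.rpow_ne_top_of_nonneg (by positivity) hCAt))
          (ENNReal.rpow_ne_top_of_nonneg (by positivity) hCBt))
    intro f hf hIr ι S x l E hl hE hEQ hvol hdisj
    set fs := fun y => f y ^ s with hfs
    have hfs_meas : Measurable fs := hf.pow_const _
    have hfsr : ∀ y, fs y ^ (r/s) = f y ^ r := fun y => by
      rw [hfs]; dsimp only
      rw [← ENNReal.rpow_mul]
      congr 1
      field_simp
    have hQint : ∀ i, (∫⁻ z in cube (x i) (l i), fs z) ≠ ⊤ := by
      intro i
      have hpq : (r/s).HolderConjugate (Real.conjExponent (r/s)) :=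
        Real.HolderConjugate.conjExponent hrs1
      have hh : ∫⁻ z in cube (x i) (l i), fs z
          ≤ (∫⁻ z in cube (x i) (l i), fs z ^ (r/s)) ^ (1/(r/s)) *
            (∫⁻ z in cube (x i) (l i), ((1:ℝ≥0∞)) ^ (Real.conjExponent (r/s)))
              ^ (1/(Real.conjExponent (r/s))) := by
        have := ENNReal.lintegral_mul_le_Lp_mul_Lq (volume.restrict (cube (x i) (l i))) hpq
          hfs_meas.aemeasurable (aemeasurable_const (b := (1:ℝ≥0∞)))
        simpa using this
      refine ne_top_of_le_ne_top ?_ hh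
      apply ENNReal.mul_ne_top
      · apply ENNReal.rpow_ne_top_of_nonneg hpq.one_div_nonneg
        have h1 : ∫⁻ z in cube (x i) (l i), fs z ^ (r/s)
            = ∫⁻ z in cube (x i) (l i), f z ^ r := lintegral_congr fun z => hfsr z
        rw [h1]
        exact ne_top_of_le_ne_top hIr (setLIntegral_le_lintegral _ _)
      · apply ENNReal.rpow_ne_top_of_nonneg hpq.symm.one_div_nonneg
        have h2 : ∫⁻ _ in cube (x i) (l i), ((1:ℝ≥0∞)) ^ (Real.conjExponent (r/s))
            = volume (cube (x i) (l i)) := by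
          simp
        rw [h2]
        exact volume_cube_ne_top _ _
    set avg := fun i => (volume (cube (x i) (l i)))⁻¹ * ∫⁻ z in cube (x i) (l i), fs z
      with havgdef
    have havgt : ∀ i, avg i ≠ ⊤ := fun i => ENNReal.mul_ne_top
      (ENNReal.inv_ne_top.mpr (volume_cube_pos _ (hl i))) (hQint i)
    have hone_div : (1/s) * r = r / s := by ring
    have hQmeas : ∀ i, Measurable ((cube (x i) (l i)).indicator (fun _ => (1:ℝ≥0∞))) :=
      fun i => measurable_const.indicator (measurableSet_cube _ _)
    have hEmeas : ∀ i, Measurable ((E i).indicator (fun _ => (1:ℝ≥0∞))) :=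
      fun i => measurable_const.indicator (hE i)
    have hdisjS : (↑S : Set ι).PairwiseDisjoint E := hdisj.set_pairwise _
    set F := fun y => ∑ i ∈ S,
        avg i ^ (1/s) * (cube (x i) (l i)).indicator (fun _ => (1:ℝ≥0∞)) y with hFdef
    have hFmeas : Measurable F :=
      Finset.measurable_sum _ fun i _ => (hQmeas i).const_mul _
    have hgmeas : Measurable (fun z => F z ^ (r-1)) := hFmeas.pow_const _
    have havt : ∀ i, avg i ^ (1/s) ≠ ⊤ :=
      fun i => ENNReal.rpow_ne_top_of_nonneg (by positivity) (havgt i)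
    have hBt : (∑ i ∈ S, avg i ^ (1/s)) ≠ ⊤ :=
      (ENNReal.sum_lt_top.mpr fun i _ => (havt i).lt_top).ne
    have hFle : ∀ y, F y ≤ ∑ i ∈ S, avg i ^ (1/s) := by
      intro y
      refine Finset.sum_le_sum fun i _ => ?_
      by_cases hy : y ∈ cube (x i) (l i) <;>
        simp [Set.indicator_of_mem, Set.indicator_of_notMem, hy]
    have hFt : ∀ y, F y ≠ ⊤ := fun y => ((hFle y).trans_lt hBt.lt_top).ne
    have hXt : (∫⁻ y, F y ^ r) ≠ ⊤ := by
      have hb : ∀ y, F y ^ r ≤ (∑ i ∈ S, avg i ^ (1/s)) ^ r *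
          (⋃ i ∈ S, cube (x i) (l i)).indicator (fun _ => (1:ℝ≥0∞)) y := by
        intro y
        by_cases hyU : y ∈ ⋃ i ∈ S, cube (x i) (l i)
        · rw [Set.indicator_of_mem hyU, mul_one]
          exact ENNReal.rpow_le_rpow (hFle y) hr0.le
        · have hF0 : F y = 0 := Finset.sum_eq_zero fun i hi => by
            rw [Set.indicator_of_notMem
              (fun hyi => hyU (Set.mem_biUnion hi hyi)), mul_zero]
          rw [hF0, ENNReal.zero_rpow_of_pos hr0]
          exact zero_le
      have hUmeas : MeasurableSet (⋃ i ∈ S, cube (x i) (l i)) :=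
        S.measurableSet_biUnion fun i _ => measurableSet_cube _ _
      refine ne_top_of_le_ne_top ?_ (lintegral_mono hb)
      rw [lintegral_const_mul _ (measurable_const.indicator hUmeas),
        lintegral_indicator hUmeas, setLIntegral_one]
      apply ENNReal.mul_ne_top (ENNReal.rpow_ne_top_of_nonneg hr0.le hBt)
      exact ne_top_of_le_ne_top
        (ENNReal.sum_lt_top.mpr fun i _ => (volume_cube_ne_top (x i) (l i)).lt_top).ne
        (measure_biUnion_finset_le _ _)
    show (∫⁻ y, F y ^ r) ≤ _ * ∫⁻ y, f y ^ r
    by_cases hX0 : (∫⁻ y, F y ^ r) = 0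
    · exact hX0.le.trans zero_le
    have hbint : ∀ i, (∫⁻ z in cube (x i) (l i), F z ^ (r-1)) ≠ ⊤ := by
      intro i
      have hgle : ∀ z, F z ^ (r-1) ≤ (∑ i ∈ S, avg i ^ (1/s)) ^ (r-1) :=
        fun z => ENNReal.rpow_le_rpow (hFle z) (by linarith)
      refine ne_top_of_le_ne_top ?_ (lintegral_mono hgle)
      rw [setLIntegral_const]
      exact ENNReal.mul_ne_top
        (ENNReal.rpow_ne_top_of_nonneg (by linarith) hBt) (volume_cube_ne_top _ _)
    have hstep1 : (∫⁻ y, F y ^ r) = ∑ i ∈ S, avg i ^ (1/s) *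
        ∫⁻ z in cube (x i) (l i), F z ^ (r-1) := by
      have h1 : ∀ y, F y ^ r = ∑ i ∈ S, avg i ^ (1/s) *
          ((cube (x i) (l i)).indicator (fun z => F z ^ (r-1)) y) := by
        intro y
        calc F y ^ r = F y ^ (r-1) * F y := (rpow_sub_one_mul hr1 _).symm
          _ = F y ^ (r-1) * ∑ i ∈ S,
              avg i ^ (1/s) * (cube (x i) (l i)).indicator (fun _ => (1:ℝ≥0∞)) y := rfl
          _ = ∑ i ∈ S, F y ^ (r-1) *
              (avg i ^ (1/s) * (cube (x i) (l i)).indicator (fun _ => (1:ℝ≥0∞)) y) := by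
              rw [Finset.mul_sum]
          _ = ∑ i ∈ S, avg i ^ (1/s) *
              ((cube (x i) (l i)).indicator (fun z => F z ^ (r-1)) y) := by
              refine Finset.sum_congr rfl fun i _ => ?_
              by_cases hy : y ∈ cube (x i) (l i)
              · rw [Set.indicator_of_mem hy, Set.indicator_of_mem hy]
                ring
              · rw [Set.indicator_of_notMem hy, Set.indicator_of_notMem hy]
                ring
      rw [lintegral_congr h1, lintegral_finset_sum _ (fun i _ =>
        ((hgmeas.indicator (measurableSet_cube _ _)).const_mul _))]
      refine Finset.sum_congr rfl fun i _ => ?_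
      rw [lintegral_const_mul _ (hgmeas.indicator (measurableSet_cube _ _)),
        lintegral_indicator (measurableSet_cube _ _)]
    have hQE : ∀ i, volume (cube (x i) (l i)) ≤ η⁻¹ * volume (E i) := by
      intro i
      rw [← one_mul (volume (cube (x i) (l i))), ← ENNReal.inv_mul_cancel hη0 hηt,
        mul_assoc]
      exact mul_le_mul_right (hvol i) _
    have key2 : (∫⁻ y, F y ^ r) ≤ η⁻¹ * ∑ i ∈ S, (avg i ^ (1/s) *
        ((volume (cube (x i) (l i)))⁻¹ * ∫⁻ z in cube (x i) (l i), F z ^ (r-1)))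
        * volume (E i) := by
      rw [hstep1, Finset.mul_sum]
      refine Finset.sum_le_sum fun i _ => ?_
      have hμ0 := volume_cube_pos (x i) (hl i)
      have hμt := volume_cube_ne_top (x i) (l i)
      have h2 : ∫⁻ z in cube (x i) (l i), F z ^ (r-1)
          = ((volume (cube (x i) (l i)))⁻¹ * ∫⁻ z in cube (x i) (l i), F z ^ (r-1))
            * volume (cube (x i) (l i)) := by
        rw [mul_comm ((volume (cube (x i) (l i)))⁻¹) _, mul_assoc,
          ENNReal.inv_mul_cancel hμ0 hμt, mul_one]
      calc avg i ^ (1/s) * ∫⁻ z in cube (x i) (l i), F z ^ (r-1)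
          = avg i ^ (1/s) * (((volume (cube (x i) (l i)))⁻¹ *
              ∫⁻ z in cube (x i) (l i), F z ^ (r-1)) * volume (cube (x i) (l i))) := by
            rw [← h2]
        _ ≤ avg i ^ (1/s) * (((volume (cube (x i) (l i)))⁻¹ *
              ∫⁻ z in cube (x i) (l i), F z ^ (r-1)) * (η⁻¹ * volume (E i))) := by
            gcongr
            exact hQE i
        _ = η⁻¹ * (avg i ^ (1/s) * ((volume (cube (x i) (l i)))⁻¹ *
              ∫⁻ z in cube (x i) (l i), F z ^ (r-1)) * volume (E i)) := by
            ring
    have humeas : Measurable (fun y => ∑ i ∈ S,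
        avg i ^ (1/s) * (E i).indicator (fun _ => (1:ℝ≥0∞)) y) :=
      Finset.measurable_sum _ fun i _ => (hEmeas i).const_mul _
    have hvmeas : Measurable (fun y => ∑ i ∈ S,
        ((volume (cube (x i) (l i)))⁻¹ * ∫⁻ z in cube (x i) (l i), F z ^ (r-1))
          * (E i).indicator (fun _ => (1:ℝ≥0∞)) y) :=
      Finset.measurable_sum _ fun i _ => (hEmeas i).const_mul _
    have hsum_eq : ∑ i ∈ S, (avg i ^ (1/s) *
        ((volume (cube (x i) (l i)))⁻¹ * ∫⁻ z in cube (x i) (l i), F z ^ (r-1)))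
        * volume (E i)
        = ∫⁻ y, (∑ i ∈ S, avg i ^ (1/s) * (E i).indicator (fun _ => (1:ℝ≥0∞)) y) *
            (∑ i ∈ S, ((volume (cube (x i) (l i)))⁻¹ *
              ∫⁻ z in cube (x i) (l i), F z ^ (r-1))
              * (E i).indicator (fun _ => (1:ℝ≥0∞)) y) := by
      have h1 : ∀ y, (∑ i ∈ S, avg i ^ (1/s) * (E i).indicator (fun _ => (1:ℝ≥0∞)) y) *
          (∑ i ∈ S, ((volume (cube (x i) (l i)))⁻¹ *
            ∫⁻ z in cube (x i) (l i), F z ^ (r-1)) * (E i).indicator (fun _ => (1:ℝ≥0∞)) y)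
          = ∑ i ∈ S, (avg i ^ (1/s) * ((volume (cube (x i) (l i)))⁻¹ *
              ∫⁻ z in cube (x i) (l i), F z ^ (r-1))) * (E i).indicator (fun _ => (1:ℝ≥0∞)) y :=
        fun y => sum_indicator_mul S E hdisjS _ _ y
      rw [lintegral_congr h1, lintegral_finset_sum _ (fun i _ => (hEmeas i).const_mul _)]
      refine Finset.sum_congr rfl fun i _ => ?_
      rw [lintegral_const_mul _ (hEmeas i), lintegral_indicator (hE i), setLIntegral_one]
    have hu_int : ∫⁻ y, (∑ i ∈ S, avg i ^ (1/s) * (E i).indicator (fun _ => (1:ℝ≥0∞)) y) ^ r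
        = ∑ i ∈ S, (avg i ^ (1/s)) ^ r * volume (E i) := by
      have h1 : ∀ y, (∑ i ∈ S, avg i ^ (1/s) * (E i).indicator (fun _ => (1:ℝ≥0∞)) y) ^ r
          = ∑ i ∈ S, (avg i ^ (1/s)) ^ r * (E i).indicator (fun _ => (1:ℝ≥0∞)) y :=
        fun y => rpow_sum_indicator S E hdisjS _ hr0 y
      rw [lintegral_congr h1, lintegral_finset_sum _ (fun i _ => (hEmeas i).const_mul _)]
      refine Finset.sum_congr rfl fun i _ => ?_
      rw [lintegral_const_mul _ (hEmeas i), lintegral_indicator (hE i), setLIntegral_one]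
    have hu_le : ∫⁻ y, (∑ i ∈ S, avg i ^ (1/s) * (E i).indicator (fun _ => (1:ℝ≥0∞)) y) ^ r
        ≤ CA * ∫⁻ y, f y ^ r := by
      rw [hu_int]
      have h2 : ∑ i ∈ S, (avg i ^ (1/s)) ^ r * volume (E i)
          = ∑ i ∈ S, avg i ^ (r/s) * volume (E i) :=
        Finset.sum_congr rfl fun i _ => by rw [← ENNReal.rpow_mul, hone_div]
      rw [h2]
      refine le_trans (hCA fs hfs_meas ι S x l E (fun i _ => hl i) (fun i _ => hE i)
        (fun i _ => hEQ i) hdisjS (fun i _ => hQint i)) (le_of_eq ?_)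
      rw [lintegral_congr (fun y => hfsr y)]
    have hv_le : ∫⁻ y, (∑ i ∈ S, ((volume (cube (x i) (l i)))⁻¹ *
          ∫⁻ z in cube (x i) (l i), F z ^ (r-1)) * (E i).indicator (fun _ => (1:ℝ≥0∞)) y)
            ^ (r/(r-1))
        ≤ CB * ∫⁻ y, F y ^ r := by
      have h1 : ∀ y, (∑ i ∈ S, ((volume (cube (x i) (l i)))⁻¹ *
          ∫⁻ z in cube (x i) (l i), F z ^ (r-1)) * (E i).indicator (fun _ => (1:ℝ≥0∞)) y)
            ^ (r/(r-1))
          = ∑ i ∈ S, (((volume (cube (x i) (l i)))⁻¹ *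
              ∫⁻ z in cube (x i) (l i), F z ^ (r-1)) ^ (r/(r-1)))
              * (E i).indicator (fun _ => (1:ℝ≥0∞)) y :=
        fun y => rpow_sum_indicator S E hdisjS _ hr'0 y
      have h2 : ∫⁻ y, (∑ i ∈ S, ((volume (cube (x i) (l i)))⁻¹ *
          ∫⁻ z in cube (x i) (l i), F z ^ (r-1)) * (E i).indicator (fun _ => (1:ℝ≥0∞)) y)
            ^ (r/(r-1))
          = ∑ i ∈ S, (((volume (cube (x i) (l i)))⁻¹ *
              ∫⁻ z in cube (x i) (l i), F z ^ (r-1)) ^ (r/(r-1))) * volume (E i) := by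
        rw [lintegral_congr h1, lintegral_finset_sum _ (fun i _ => (hEmeas i).const_mul _)]
        refine Finset.sum_congr rfl fun i _ => ?_
        rw [lintegral_const_mul _ (hEmeas i), lintegral_indicator (hE i), setLIntegral_one]
      rw [h2]
      have h3 := hCB (fun z => F z ^ (r-1)) hgmeas ι S x l E (fun i _ => hl i)
        (fun i _ => hE i) (fun i _ => hEQ i) hdisjS (fun i _ => hbint i)
      refine le_trans h3 (le_of_eq ?_)
      congr 1
      refine lintegral_congr fun y => ?_
      rw [← ENNReal.rpow_mul]
      congr 1
      exact hconj.sub_one_mul_conj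
    have hmain : (∫⁻ y, F y ^ r) ≤ η⁻¹ * ((CA * ∫⁻ y, f y ^ r) ^ (1/r) *
        (CB * ∫⁻ y, F y ^ r) ^ (1/(r/(r-1)))) := by
      refine key2.trans ?_
      rw [hsum_eq]
      refine mul_le_mul_right ?_ _
      have hHolder := ENNReal.lintegral_mul_le_Lp_mul_Lq volume hconj
        humeas.aemeasurable hvmeas.aemeasurable
      refine le_trans (le_of_eq ?_) (le_trans hHolder ?_)
      · rfl
      · exact mul_le_mul' (ENNReal.rpow_le_rpow hu_le (by positivity))
          (ENNReal.rpow_le_rpow hv_le (by positivity))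
    have hXr' : ((∫⁻ y, F y ^ r) ^ (1/(r/(r-1)))) ≠ 0 := by
      rw [Ne, ENNReal.rpow_eq_zero_iff_of_pos (by positivity)]
      exact hX0
    have hXr't : ((∫⁻ y, F y ^ r) ^ (1/(r/(r-1)))) ≠ ⊤ :=
      ENNReal.rpow_ne_top_of_nonneg (by positivity) hXt
    have hsplit : (∫⁻ y, F y ^ r)
        = (∫⁻ y, F y ^ r) ^ (1/r) * (∫⁻ y, F y ^ r) ^ (1/(r/(r-1))) := by
      rw [← ENNReal.rpow_add _ _ hX0 hXt]
      have hse : 1/r + 1/(r/(r-1)) = 1 := by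
        have := hconj.inv_add_inv_eq_one
        rw [one_div, one_div]
        exact this
      rw [hse, ENNReal.rpow_one]
    have hfinal : (∫⁻ y, F y ^ r) ^ (1/r)
        ≤ (η⁻¹ * CA ^ (1/r) * CB ^ (1/(r/(r-1)))) * (∫⁻ y, f y ^ r) ^ (1/r) := by
      have h3 : (∫⁻ y, F y ^ r) ^ (1/r) * (∫⁻ y, F y ^ r) ^ (1/(r/(r-1)))
          ≤ (η⁻¹ * CA ^ (1/r) * CB ^ (1/(r/(r-1))) * (∫⁻ y, f y ^ r) ^ (1/r))
            * (∫⁻ y, F y ^ r) ^ (1/(r/(r-1))) := by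
        rw [← hsplit]
        refine hmain.trans (le_of_eq ?_)
        rw [ENNReal.mul_rpow_of_nonneg _ _ (by positivity : (0:ℝ) ≤ 1/r),
          ENNReal.mul_rpow_of_nonneg _ _ (by positivity : (0:ℝ) ≤ 1/(r/(r-1)))]
        ring
      have h4 := (ENNReal.mul_le_mul_iff_left hXr' hXr't).mp h3
      calc (∫⁻ y, F y ^ r) ^ (1/r)
          ≤ η⁻¹ * CA ^ (1/r) * CB ^ (1/(r/(r-1))) * (∫⁻ y, f y ^ r) ^ (1/r) := h4
        _ = (η⁻¹ * CA ^ (1/r) * CB ^ (1/(r/(r-1)))) * (∫⁻ y, f y ^ r) ^ (1/r) := by ring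
    calc (∫⁻ y, F y ^ r) = ((∫⁻ y, F y ^ r) ^ (1/r)) ^ r := by
          rw [← ENNReal.rpow_mul, one_div_mul_cancel hr0.ne', ENNReal.rpow_one]
      _ ≤ ((η⁻¹ * CA ^ (1/r) * CB ^ (1/(r/(r-1)))) * (∫⁻ y, f y ^ r) ^ (1/r)) ^ r :=
          ENNReal.rpow_le_rpow hfinal hr0.le
      _ = (η⁻¹ * CA ^ (1/r) * CB ^ (1/(r/(r-1)))) ^ r * ∫⁻ y, f y ^ r := by
          rw [ENNReal.mul_rpow_of_nonneg _ _ hr0.le, ← ENNReal.rpow_mul,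
            one_div_mul_cancel hr0.ne', ENNReal.rpow_one]

end SparseAux

/-- A (half-open, axis-parallel) cube in `ℝⁿ`. -/
def IsCube {n : ℕ} (Q : Set (Fin n → ℝ)) : Prop :=
  ∃ (x : Fin n → ℝ) (l : ℝ), 0 < l ∧ Q = {y | ∀ j, x j ≤ y j ∧ y j < x j + l}

/-- for `0 < s < r < ∞`, `h ∈ L^r(ℝⁿ)` and an `η`-sparse family of cubes `Q i`,
`‖Σ_i ⟨|h|^s⟩_{Q i}^{1/s} χ_{Q i}‖_{L^r} ≲ ‖h‖_{L^r}`, with constant depending only on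
`n, s, r, η`. -/
theorem sparse_average_bound (n : ℕ) (s r : ℝ) (hs : 0 < s) (hsr : s < r) (η : ℝ≥0∞)
    (hη : 0 < η) (hη1 : η < 1) :
    ∃ C : ℝ≥0∞, 0 < C ∧ C ≠ ⊤ ∧
      ∀ (h : (Fin n → ℝ) → ℝ), MemLp h (ENNReal.ofReal r) volume →
      ∀ (ι : Type) (Q E : ι → Set (Fin n → ℝ)),
        (∀ i, IsCube (Q i)) →
        (∀ i, MeasurableSet (E i)) →
        (∀ i, E i ⊆ Q i) →
        (∀ i, η * volume (Q i) ≤ volume (E i)) →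
        Pairwise (Function.onFun Disjoint E) →
        (∫⁻ x, (∑' i : ι,
            ((volume (Q i))⁻¹ * ∫⁻ y in Q i, (‖h y‖₊ : ℝ≥0∞) ^ s) ^ (1 / s) *
              (Q i).indicator (fun _ => (1 : ℝ≥0∞)) x) ^ r) ^ (1 / r)
          ≤ C * (∫⁻ x, (‖h x‖₊ : ℝ≥0∞) ^ r) ^ (1 / r) := by
  classical
  have hr0 : (0:ℝ) < r := hs.trans hsr
  obtain ⟨C', hC'0, hC't, hC'⟩ := SparseAux.finite_bound n s r hs hsr η hη hη1
  refine ⟨C' ^ (1/r), ENNReal.rpow_pos hC'0 hC't,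
    ENNReal.rpow_ne_top_of_nonneg (by positivity) hC't, ?_⟩
  intro h hMem ι Q E hQcube hEmeas hEQ hvol hdisj
  choose xc lc hlc hQeq using hQcube
  have hQc : ∀ i, Q i = SparseAux.cube (xc i) (lc i) := fun i => hQeq i
  haveI : Countable ι := by
    have h1 : {i : ι | 0 < volume (E i)} = Set.univ := by
      refine Set.eq_univ_of_forall fun i => ?_
      have hQpos : volume (Q i) ≠ 0 := by
        rw [hQc i]; exact SparseAux.volume_cube_pos (xc i) (hlc i)
      have : (0:ℝ≥0∞) < η * volume (Q i) := ENNReal.mul_pos hη.ne' hQpos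
      exact this.trans_le (hvol i)
    have h2 := MeasureTheory.Measure.countable_meas_pos_of_disjoint_iUnion
      (μ := (volume : Measure (Fin n → ℝ))) hEmeas hdisj
    rw [h1] at h2
    exact Set.countable_univ_iff.mp h2
  have hae := hMem.aestronglyMeasurable
  set h' := hae.mk h with hh'def
  have h'meas : Measurable fun y => (‖h' y‖₊ : ℝ≥0∞) :=
    hae.stronglyMeasurable_mk.measurable.nnnorm.coe_nnreal_ennreal
  have hcongr : h =ᵐ[volume] h' := hae.ae_eq_mk
  have hIr : (∫⁻ y, (‖h y‖₊ : ℝ≥0∞) ^ r) ≠ ⊤ := by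
    have h1 := hMem.2
    rw [eLpNorm_eq_lintegral_rpow_enorm_toReal (ne_of_gt (ENNReal.ofReal_pos.mpr hr0))
      ENNReal.ofReal_ne_top, ENNReal.toReal_ofReal hr0.le] at h1
    simp only [enorm_eq_nnnorm] at h1
    intro hcon
    rw [hcon, ENNReal.top_rpow_of_pos (by positivity : (0:ℝ) < 1/r)] at h1
    exact absurd h1 (lt_irrefl _)
  have hIr_eq : ∫⁻ y, (‖h y‖₊ : ℝ≥0∞) ^ r = ∫⁻ y, (‖h' y‖₊ : ℝ≥0∞) ^ r :=
    lintegral_congr_ae (hcongr.mono fun y hy => by simp only [hy])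
  have hIr' : (∫⁻ y, (‖h' y‖₊ : ℝ≥0∞) ^ r) ≠ ⊤ := by rw [← hIr_eq]; exact hIr
  have hint_eq : ∀ (A : Set (Fin n → ℝ)),
      ∫⁻ y in A, (‖h y‖₊ : ℝ≥0∞) ^ s = ∫⁻ y in A, (‖h' y‖₊ : ℝ≥0∞) ^ s := fun A =>
    lintegral_congr_ae (ae_restrict_of_ae (hcongr.mono fun y hy => by simp only [hy]))
  have hLHS_eq : (∫⁻ xx, (∑' i : ι,
        ((volume (Q i))⁻¹ * ∫⁻ y in Q i, (‖h y‖₊ : ℝ≥0∞) ^ s) ^ (1/s) *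
          (Q i).indicator (fun _ => (1:ℝ≥0∞)) xx) ^ r)
      = ∫⁻ xx, (∑' i : ι,
        ((volume (SparseAux.cube (xc i) (lc i)))⁻¹ *
          ∫⁻ y in SparseAux.cube (xc i) (lc i), (‖h' y‖₊ : ℝ≥0∞) ^ s) ^ (1/s) *
          (SparseAux.cube (xc i) (lc i)).indicator (fun _ => (1:ℝ≥0∞)) xx) ^ r := by
    apply lintegral_congr
    intro xx
    congr 1
    apply tsum_congr
    intro i
    rw [hint_eq (Q i), hQc i]
  rw [hLHS_eq, hIr_eq]
  have hEQ' : ∀ i, E i ⊆ SparseAux.cube (xc i) (lc i) := fun i => (hQc i) ▸ hEQ i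
  have hvol' : ∀ i, η * volume (SparseAux.cube (xc i) (lc i)) ≤ volume (E i) :=
    fun i => (hQc i) ▸ hvol i
  set a : ι → ℝ≥0∞ := fun i => ((volume (SparseAux.cube (xc i) (lc i)))⁻¹ *
      ∫⁻ y in SparseAux.cube (xc i) (lc i), (‖h' y‖₊ : ℝ≥0∞) ^ s) ^ (1/s) with hadef
  show (∫⁻ xx, (∑' i : ι, a i *
      (SparseAux.cube (xc i) (lc i)).indicator (fun _ => (1:ℝ≥0∞)) xx) ^ r) ^ (1/r)
    ≤ C' ^ (1/r) * (∫⁻ y, (‖h' y‖₊ : ℝ≥0∞) ^ r) ^ (1/r)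
  have hSmeas : ∀ T : Finset ι, Measurable fun xx => (∑ i ∈ T, a i *
      (SparseAux.cube (xc i) (lc i)).indicator (fun _ => (1:ℝ≥0∞)) xx) ^ r := fun T =>
    (Finset.measurable_sum _ fun i _ =>
      (measurable_const.indicator (SparseAux.measurableSet_cube _ _)).const_mul _).pow_const _
  have hint_sup : (∫⁻ xx, (∑' i : ι, a i *
      (SparseAux.cube (xc i) (lc i)).indicator (fun _ => (1:ℝ≥0∞)) xx) ^ r)
      = ⨆ T : Finset ι, ∫⁻ xx, (∑ i ∈ T, a i *
          (SparseAux.cube (xc i) (lc i)).indicator (fun _ => (1:ℝ≥0∞)) xx) ^ r := by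
    have hpt : ∀ xx, (∑' i : ι, a i *
        (SparseAux.cube (xc i) (lc i)).indicator (fun _ => (1:ℝ≥0∞)) xx) ^ r
        = ⨆ T : Finset ι, (∑ i ∈ T, a i *
          (SparseAux.cube (xc i) (lc i)).indicator (fun _ => (1:ℝ≥0∞)) xx) ^ r := by
      intro xx
      rw [ENNReal.tsum_eq_iSup_sum]
      exact Monotone.map_iSup_of_continuousAt
        (ENNReal.continuous_rpow_const.continuousAt)
        (ENNReal.monotone_rpow_of_nonneg hr0.le)
        (by simpa using ENNReal.zero_rpow_of_pos hr0)
    rw [lintegral_congr hpt]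
    refine lintegral_iSup_directed (fun T => (hSmeas T).aemeasurable) ?_
    have hm : Monotone fun (T : Finset ι) => fun xx => (∑ i ∈ T, a i *
        (SparseAux.cube (xc i) (lc i)).indicator (fun _ => (1:ℝ≥0∞)) xx) ^ r := by
      intro T T' hTT'
      intro xx
      exact ENNReal.rpow_le_rpow (Finset.sum_le_sum_of_subset hTT') hr0.le
    exact hm.directed_le
  rw [hint_sup]
  have hsup_le : (⨆ T : Finset ι, ∫⁻ xx, (∑ i ∈ T, a i *
      (SparseAux.cube (xc i) (lc i)).indicator (fun _ => (1:ℝ≥0∞)) xx) ^ r)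
      ≤ C' * ∫⁻ y, (‖h' y‖₊ : ℝ≥0∞) ^ r := by
    refine iSup_le fun T => ?_
    exact hC' (fun y => (‖h' y‖₊ : ℝ≥0∞)) h'meas hIr' ι T xc lc E hlc hEmeas hEQ' hvol' hdisj
  calc (⨆ T : Finset ι, ∫⁻ xx, (∑ i ∈ T, a i *
      (SparseAux.cube (xc i) (lc i)).indicator (fun _ => (1:ℝ≥0∞)) xx) ^ r) ^ (1/r)
      ≤ (C' * ∫⁻ y, (‖h' y‖₊ : ℝ≥0∞) ^ r) ^ (1/r) :=
        ENNReal.rpow_le_rpow hsup_le (by positivity)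
    _ = C' ^ (1/r) * (∫⁻ y, (‖h' y‖₊ : ℝ≥0∞) ^ r) ^ (1/r) :=
        ENNReal.mul_rpow_of_nonneg _ _ (by positivity)
end
end
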